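/- arXiv:2002.12065 — 7 statements merged into one kernel-verified Lean document; each statement's English description precedes it below -/
import Mathlib

section
/- For complex $l_1, l_2, l_3$ such that all of $l_1, l_2, l_3, l_1 l_2, l_2 l_3, l_1 l_2 l_3$ differ from $1$, and integer $L \geq 3$, the sum $B_3(L) = \sum_{0 \le x_1 < x_2 < x_3 \le L-1} l_1^{x_1} l_2^{x_2} l_3^{x_3}$ equals $\frac{(l_1 l_2 l_3)^L}{(l_1 l_2 l_3 - 1)(l_1 l_2 - 1)(l_1 - 1)} - \frac{(l_2 l_3)^L}{(l_2 l_3 - 1)(l_2 - 1)(l_1 - 1)} + \frac{l_3^L l_2}{(l_3 - 1)(l_2 - 1)(l_1 l_2 - 1)} - \frac{l_2 l_3^2}{(l_1 l_2 l_3 - 1)(l_2 l_3 - 1)(l_3 - 1)}$. -/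
open Complex Finset

set_option maxHeartbeats 1000000

theorem three_particle_kinematical_sum (l₁ l₂ l₃ : ℂ)
    (h1 : l₁ ≠ 1) (h2 : l₂ ≠ 1) (h3 : l₃ ≠ 1)
    (h12 : l₁ * l₂ ≠ 1) (h23 : l₂ * l₃ ≠ 1) (h123 : l₁ * l₂ * l₃ ≠ 1)
    (L : ℕ) (hL : 3 ≤ L) :
    ∑ x₃ ∈ Finset.range L, ∑ x₂ ∈ Finset.range x₃, ∑ x₁ ∈ Finset.range x₂,
        l₁ ^ x₁ * l₂ ^ x₂ * l₃ ^ x₃ =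
      (l₁ * l₂ * l₃) ^ L / ((l₁ * l₂ * l₃ - 1) * (l₁ * l₂ - 1) * (l₁ - 1))
        - (l₂ * l₃) ^ L / ((l₂ * l₃ - 1) * (l₂ - 1) * (l₁ - 1))
        + l₃ ^ L * l₂ / ((l₃ - 1) * (l₂ - 1) * (l₁ * l₂ - 1))
        - l₂ * l₃ ^ 2 / ((l₁ * l₂ * l₃ - 1) * (l₂ * l₃ - 1) * (l₃ - 1)) := by
  have h1' : l₁ - 1 ≠ 0 := sub_ne_zero.mpr h1
  have h2' : l₂ - 1 ≠ 0 := sub_ne_zero.mpr h2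
  have h3' : l₃ - 1 ≠ 0 := sub_ne_zero.mpr h3
  have h12' : l₁ * l₂ - 1 ≠ 0 := sub_ne_zero.mpr h12
  have h23' : l₂ * l₃ - 1 ≠ 0 := sub_ne_zero.mpr h23
  have h123' : l₁ * l₂ * l₃ - 1 ≠ 0 := sub_ne_zero.mpr h123
  have e1 : ∀ x₃ ∈ Finset.range L, ∑ x₂ ∈ Finset.range x₃, ∑ x₁ ∈ Finset.range x₂,
      l₁ ^ x₁ * l₂ ^ x₂ * l₃ ^ x₃ =
      (((l₁ * l₂) ^ x₃ - 1) / (l₁ * l₂ - 1) - (l₂ ^ x₃ - 1) / (l₂ - 1)) * l₃ ^ x₃ / (l₁ - 1) := by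
    intro x₃ _
    have e0 : ∀ x₂ ∈ Finset.range x₃, ∑ x₁ ∈ Finset.range x₂, l₁ ^ x₁ * l₂ ^ x₂ * l₃ ^ x₃ =
        ((l₁ * l₂) ^ x₂ * l₃ ^ x₃ - l₂ ^ x₂ * l₃ ^ x₃) / (l₁ - 1) := by
      intro x₂ _
      have : ∑ x₁ ∈ Finset.range x₂, l₁ ^ x₁ * l₂ ^ x₂ * l₃ ^ x₃ =
          (∑ x₁ ∈ Finset.range x₂, l₁ ^ x₁) * (l₂ ^ x₂ * l₃ ^ x₃) := by
        rw [Finset.sum_mul]; simp [mul_assoc]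
      rw [this, geom_sum_eq h1]
      field_simp
      ring
    rw [Finset.sum_congr rfl e0]
    have : ∑ x₂ ∈ Finset.range x₃, ((l₁ * l₂) ^ x₂ * l₃ ^ x₃ - l₂ ^ x₂ * l₃ ^ x₃) / (l₁ - 1)
        = ((∑ x₂ ∈ Finset.range x₃, (l₁ * l₂) ^ x₂) * l₃ ^ x₃
          - (∑ x₂ ∈ Finset.range x₃, l₂ ^ x₂) * l₃ ^ x₃) / (l₁ - 1) := by
      simp only [← Finset.sum_div, Finset.sum_sub_distrib, ← Finset.sum_mul]
    rw [this, geom_sum_eq h12, geom_sum_eq h2]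
    ring
  rw [Finset.sum_congr rfl e1]
  have expand : ∀ x₃ : ℕ,
      (((l₁ * l₂) ^ x₃ - 1) / (l₁ * l₂ - 1) - (l₂ ^ x₃ - 1) / (l₂ - 1)) * l₃ ^ x₃ / (l₁ - 1)
      = (l₁ * l₂ * l₃) ^ x₃ / ((l₁ * l₂ - 1) * (l₁ - 1))
        - l₃ ^ x₃ / ((l₁ * l₂ - 1) * (l₁ - 1))
        - (l₂ * l₃) ^ x₃ / ((l₂ - 1) * (l₁ - 1))
        + l₃ ^ x₃ / ((l₂ - 1) * (l₁ - 1)) := by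
    intro x₃
    rw [mul_pow, mul_pow]
    field_simp
    ring
  rw [Finset.sum_congr rfl (fun x₃ _ => expand x₃)]
  simp only [Finset.sum_add_distrib, Finset.sum_sub_distrib, ← Finset.sum_div]
  rw [geom_sum_eq h123, geom_sum_eq h23, geom_sum_eq h3]
  clear e1 expand hL
  set D : ℂ := (l₁ - 1) * (l₂ - 1) * (l₃ - 1) * (l₁ * l₂ - 1) * (l₂ * l₃ - 1) *
    (l₁ * l₂ * l₃ - 1) with hDdef
  have hD : D ≠ 0 := by
    exact mul_ne_zero (mul_ne_zero (mul_ne_zero (mul_ne_zero (mul_ne_zero h1' h2') h3')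
      h12') h23') h123'
  have d1 : (l₁ * l₂ * l₃ - 1) * ((l₁ * l₂ - 1) * (l₁ - 1)) ≠ 0 :=
    mul_ne_zero h123' (mul_ne_zero h12' h1')
  have d2 : (l₃ - 1) * ((l₁ * l₂ - 1) * (l₁ - 1)) ≠ 0 :=
    mul_ne_zero h3' (mul_ne_zero h12' h1')
  have d3 : (l₂ * l₃ - 1) * ((l₂ - 1) * (l₁ - 1)) ≠ 0 :=
    mul_ne_zero h23' (mul_ne_zero h2' h1')
  have d4 : (l₃ - 1) * ((l₂ - 1) * (l₁ - 1)) ≠ 0 :=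
    mul_ne_zero h3' (mul_ne_zero h2' h1')
  have D1 : (l₁ * l₂ * l₃ - 1) * (l₁ * l₂ - 1) * (l₁ - 1) ≠ 0 :=
    mul_ne_zero (mul_ne_zero h123' h12') h1'
  have D2 : (l₂ * l₃ - 1) * (l₂ - 1) * (l₁ - 1) ≠ 0 :=
    mul_ne_zero (mul_ne_zero h23' h2') h1'
  have D3 : (l₃ - 1) * (l₂ - 1) * (l₁ * l₂ - 1) ≠ 0 :=
    mul_ne_zero (mul_ne_zero h3' h2') h12'
  have D4 : (l₁ * l₂ * l₃ - 1) * (l₂ * l₃ - 1) * (l₃ - 1) ≠ 0 :=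
    mul_ne_zero (mul_ne_zero h123' h23') h3'
  rw [div_div, div_div, div_div, div_div]
  rw [show (((l₁ * l₂ * l₃) ^ L - 1) / ((l₁ * l₂ * l₃ - 1) * ((l₁ * l₂ - 1) * (l₁ - 1))) :
      ℂ) = ((l₁ * l₂ * l₃) ^ L - 1) * ((l₂ - 1) * (l₃ - 1) * (l₂ * l₃ - 1)) / D from by
    rw [div_eq_div_iff d1 hD, hDdef]; ring]
  rw [show ((l₃ ^ L - 1) / ((l₃ - 1) * ((l₁ * l₂ - 1) * (l₁ - 1))) : ℂ) =
      (l₃ ^ L - 1) * ((l₂ - 1) * (l₂ * l₃ - 1) * (l₁ * l₂ * l₃ - 1)) / D from by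
    rw [div_eq_div_iff d2 hD, hDdef]; ring]
  rw [show ((((l₂ * l₃) ^ L - 1)) / ((l₂ * l₃ - 1) * ((l₂ - 1) * (l₁ - 1))) : ℂ) =
      ((l₂ * l₃) ^ L - 1) * ((l₃ - 1) * (l₁ * l₂ - 1) * (l₁ * l₂ * l₃ - 1)) / D from by
    rw [div_eq_div_iff d3 hD, hDdef]; ring]
  rw [show ((l₃ ^ L - 1) / ((l₃ - 1) * ((l₂ - 1) * (l₁ - 1))) : ℂ) =
      (l₃ ^ L - 1) * ((l₁ * l₂ - 1) * (l₂ * l₃ - 1) * (l₁ * l₂ * l₃ - 1)) / D from by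
    rw [div_eq_div_iff d4 hD, hDdef]; ring]
  rw [show ((l₁ * l₂ * l₃) ^ L / ((l₁ * l₂ * l₃ - 1) * (l₁ * l₂ - 1) * (l₁ - 1)) : ℂ) =
      (l₁ * l₂ * l₃) ^ L * ((l₂ - 1) * (l₃ - 1) * (l₂ * l₃ - 1)) / D from by
    rw [div_eq_div_iff D1 hD, hDdef]; ring]
  rw [show ((l₂ * l₃) ^ L / ((l₂ * l₃ - 1) * (l₂ - 1) * (l₁ - 1)) : ℂ) =
      (l₂ * l₃) ^ L * ((l₃ - 1) * (l₁ * l₂ - 1) * (l₁ * l₂ * l₃ - 1)) / D from by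
    rw [div_eq_div_iff D2 hD, hDdef]; ring]
  rw [show (l₃ ^ L * l₂ / ((l₃ - 1) * (l₂ - 1) * (l₁ * l₂ - 1)) : ℂ) =
      l₃ ^ L * l₂ * ((l₁ - 1) * (l₂ * l₃ - 1) * (l₁ * l₂ * l₃ - 1)) / D from by
    rw [div_eq_div_iff D3 hD, hDdef]; ring]
  rw [show (l₂ * l₃ ^ 2 / ((l₁ * l₂ * l₃ - 1) * (l₂ * l₃ - 1) * (l₃ - 1)) : ℂ) =
      l₂ * l₃ ^ 2 * ((l₁ - 1) * (l₂ - 1) * (l₁ * l₂ - 1)) / D from by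
    rw [div_eq_div_iff D4 hD, hDdef]; ring]
  rw [div_sub_div_same, div_sub_div_same, ← add_div, div_sub_div_same,
    ← add_div, div_sub_div_same, div_eq_div_iff hD hD]
  ring
end

section
/- Let $l_1, \dots, l_N$ be complex numbers such that for every nonempty interval $\{j, j+1, \dots, k\} \subseteq \{1,\dots,N\}$ the product $l_j l_{j+1} \cdots l_k \neq 1$. Then for all integers $L \geq N$, $\sum_{0 \le x_1 < \cdots < x_N \le L-1} \prod_{i=1}^N l_i^{x_i} = \sum_{j=0}^N \frac{(-1)^j \left(\prod_{k=j+1}^N l_k\right)^L \prod_{k=2}^j l_k^{k-1}}{\prod_{k=j+1}^N \left(\prod_{o=j+1}^k l_o - 1\right) \cdot \prod_{k=1}^j \left(\prod_{o=k}^j l_o - 1\right)}$. -/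
open Complex Finset

section Aux
open Polynomial

lemma lagrange_zero (n : ℕ) (hn : 1 ≤ n) (s : Finset ℕ) (hs : s.card = n + 1)
    (v : ℕ → ℂ) (hv : Set.InjOn v s) :
    ∑ j ∈ s, v j ^ (n - 1) * (∏ k ∈ s.erase j, (v j - v k))⁻¹ = 0 := by
  have hd : (X ^ (n-1) : ℂ[X]).degree < s.card := by
    rw [degree_X_pow, hs]
    exact_mod_cast Nat.lt_succ_of_le (Nat.sub_le n 1)
  have h := Lagrange.eq_interpolate (f := (X ^ (n-1) : ℂ[X])) hv hd
  have h2 := congrArg (fun p => Polynomial.coeff p n) h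
  simp only [Lagrange.interpolate_apply, finset_sum_coeff, coeff_C_mul, eval_pow, eval_X,
    coeff_X_pow] at h2
  rw [if_neg (by omega)] at h2
  rw [h2]
  apply Finset.sum_congr rfl
  intro j hj
  congr 1
  have hb : (Lagrange.basis s v j).natDegree = n := by
    rw [Lagrange.natDegree_basis hv hj, hs]
    omega
  rw [← hb, Polynomial.coeff_natDegree]
  unfold Lagrange.basis
  rw [Polynomial.leadingCoeff_prod, ← Finset.prod_inv_distrib]
  apply Finset.prod_congr rfl
  intro k hk
  have hne : v j ≠ v k := by
    intro hvv
    exact Finset.ne_of_mem_erase hk (hv (Finset.mem_of_mem_erase hk) hj hvv.symm)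
  rw [Lagrange.basisDivisor, leadingCoeff_mul, leadingCoeff_C, leadingCoeff_X_sub_C, mul_one]


lemma sum_zero_of_ne_zero (N : ℕ) (hN : 1 ≤ N) (l : ℕ → ℂ)
    (hzf : ∀ j k : ℕ, 1 ≤ j → j ≤ k → k ≤ N → ∏ o ∈ Finset.Icc j k, l o ≠ 1)
    (hnz : ∀ o : ℕ, 1 ≤ o → o ≤ N → l o ≠ 0) :
    ∑ j ∈ Finset.range (N + 1),
        ((-1 : ℂ) ^ j * ∏ k ∈ Finset.Icc 2 j, l k ^ (k - 1))
          / ((∏ k ∈ Finset.Icc (j + 1) N, ((∏ o ∈ Finset.Icc (j + 1) k, l o) - 1))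
              * ∏ k ∈ Finset.Icc 1 j, ((∏ o ∈ Finset.Icc k j, l o) - 1)) = 0 := by
  set r : ℕ → ℂ := fun j => ∏ o ∈ Finset.Icc 1 j, l o with hr
  -- r 0 = 1
  have hr0 : r 0 = 1 := by simp [hr]
  -- multiplicativity
  have hrmul : ∀ a b : ℕ, a ≤ b → r a * ∏ o ∈ Finset.Icc (a+1) b, l o = r b := by
    intro a b hab
    have h1 : Finset.Icc 1 a = Finset.Ioc 0 a := Finset.Icc_add_one_left_eq_Ioc 0 a
    have h2 : Finset.Icc 1 b = Finset.Ioc 0 b := Finset.Icc_add_one_left_eq_Ioc 0 b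
    have h3 : Finset.Icc (a+1) b = Finset.Ioc a b := Finset.Icc_add_one_left_eq_Ioc a b
    rw [hr]
    simp only [h1, h2, h3]
    exact Finset.prod_Ioc_consecutive l (Nat.zero_le a) hab
  -- r j ≠ 0 for j ≤ N
  have hrnz : ∀ j : ℕ, j ≤ N → r j ≠ 0 := by
    intro j hj
    apply Finset.prod_ne_zero_iff.2
    intro o ho
    rw [Finset.mem_Icc] at ho
    exact hnz o ho.1 (ho.2.trans hj)
  -- differences
  have hdiff : ∀ a b : ℕ, a < b → b ≤ N → r b - r a = r a * ((∏ o ∈ Finset.Icc (a+1) b, l o) - 1) := by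
    intro a b hab hbN
    rw [mul_sub, mul_one, hrmul a b (le_of_lt hab)]
  have hdne : ∀ a b : ℕ, a < b → b ≤ N → r b - r a ≠ 0 := by
    intro a b hab hbN
    rw [hdiff a b hab hbN]
    exact mul_ne_zero (hrnz a (le_of_lt (lt_of_lt_of_le hab hbN)))
      (sub_ne_zero_of_ne (hzf (a+1) b (by omega) (by omega) hbN))
  -- injectivity of r on range (N+1)
  have hinj : Set.InjOn r (Finset.range (N + 1)) := by
    intro a ha b hb hab
    rw [Finset.mem_coe, Finset.mem_range] at ha hb
    by_contra hne
    rcases lt_or_gt_of_ne hne with h | h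
    · exact hdne a b h (by omega) (by rw [hab, sub_self])
    · exact hdne b a h (by omega) (by rw [hab, sub_self])
  -- weight lemma
  have hw : ∀ j : ℕ, (∏ k ∈ Finset.range j, r k) * ∏ k ∈ Finset.Icc 2 j, l k ^ (k - 1)
      = r j ^ (j - 1) := by
    intro j
    induction j with
    | zero => simp
    | succ n ih =>
      rcases Nat.eq_zero_or_pos n with h0 | hpos
      · subst h0; simp [hr0]
      · have h2n : 2 ≤ n + 1 := by omega
        rw [Finset.prod_range_succ, Finset.prod_Icc_succ_top h2n]
        have hrs : r (n + 1) = r n * l (n + 1) := by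
          rw [← hrmul n (n + 1) (by omega)]
          simp
        have hpow : r n ^ (n - 1) * r n = r n ^ n := by
          rw [← pow_succ]
          congr 1
          omega
        have hn1 : n + 1 - 1 = n := by omega
        rw [hrs, hn1]
        calc (∏ k ∈ Finset.range n, r k) * r n
              * ((∏ k ∈ Finset.Icc 2 n, l k ^ (k - 1)) * l (n + 1) ^ n)
            = ((∏ k ∈ Finset.range n, r k) * ∏ k ∈ Finset.Icc 2 n, l k ^ (k - 1))
              * (r n * l (n + 1) ^ n) := by ring
          _ = r n ^ (n - 1) * (r n * l (n + 1) ^ n) := by rw [ih]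
          _ = (r n ^ (n - 1) * r n) * l (n + 1) ^ n := by ring
          _ = r n ^ n * l (n + 1) ^ n := by rw [hpow]
          _ = (r n * l (n + 1)) ^ n := (mul_pow _ _ _).symm
  -- split the erased range
  have hsplit : ∀ j : ℕ, j ≤ N → (Finset.range (N + 1)).erase j
      = Finset.range j ∪ Finset.Ico (j + 1) (N + 1) := by
    intro j hj
    ext x
    simp only [Finset.mem_erase, Finset.mem_range, Finset.mem_union, Finset.mem_Ico]
    omega
  have hdisj : ∀ j : ℕ, Disjoint (Finset.range j) (Finset.Ico (j + 1) (N + 1)) := by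
    intro j
    rw [Finset.disjoint_left]
    intro x hx hx2
    rw [Finset.mem_range] at hx
    rw [Finset.mem_Ico] at hx2
    omega
  -- lower product
  have hlow : ∀ j : ℕ, j ≤ N → ∏ k ∈ Finset.range j, (r j - r k)
      = (∏ k ∈ Finset.range j, r k)
        * ∏ k ∈ Finset.Icc 1 j, ((∏ o ∈ Finset.Icc k j, l o) - 1) := by
    intro j hj
    have step1 : ∏ k ∈ Finset.range j, (r j - r k)
        = ∏ k ∈ Finset.range j, (r k * ((∏ o ∈ Finset.Icc (k + 1) j, l o) - 1)) := by
      apply Finset.prod_congr rfl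
      intro k hk
      rw [Finset.mem_range] at hk
      exact hdiff k j hk hj
    rw [step1, Finset.prod_mul_distrib]
    congr 1
    rw [← Finset.Ico_add_one_right_eq_Icc, Finset.prod_Ico_eq_prod_range]
    apply Finset.prod_congr rfl
    intro k hk
    rw [Nat.add_comm 1 k]
  -- upper product
  have hup : ∀ j : ℕ, j ≤ N → ∏ k ∈ Finset.Ico (j + 1) (N + 1), (r j - r k)
      = (-1 : ℂ) ^ (N - j) * r j ^ (N - j)
        * ∏ k ∈ Finset.Icc (j + 1) N, ((∏ o ∈ Finset.Icc (j + 1) k, l o) - 1) := by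
    intro j hj
    rw [Finset.Ico_add_one_right_eq_Icc]
    have step1 : ∏ k ∈ Finset.Icc (j + 1) N, (r j - r k)
        = ∏ k ∈ Finset.Icc (j + 1) N, ((-r j) * ((∏ o ∈ Finset.Icc (j + 1) k, l o) - 1)) := by
      apply Finset.prod_congr rfl
      intro k hk
      rw [Finset.mem_Icc] at hk
      have := hdiff j k (by omega) hk.2
      rw [← neg_sub, this]
      ring
    rw [step1, Finset.prod_mul_distrib, Finset.prod_const, Nat.card_Icc]
    have : N + 1 - (j + 1) = N - j := by omega
    rw [this, neg_pow]
  -- per-term identity and conclusion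
  have hterm : ∀ j ∈ Finset.range (N + 1),
      ((-1 : ℂ) ^ j * ∏ k ∈ Finset.Icc 2 j, l k ^ (k - 1))
        / ((∏ k ∈ Finset.Icc (j + 1) N, ((∏ o ∈ Finset.Icc (j + 1) k, l o) - 1))
            * ∏ k ∈ Finset.Icc 1 j, ((∏ o ∈ Finset.Icc k j, l o) - 1))
      = (-1 : ℂ) ^ N * (r j ^ (N - 1)
          * (∏ k ∈ (Finset.range (N + 1)).erase j, (r j - r k))⁻¹) := by
    intro j hjmem
    rw [Finset.mem_range] at hjmem
    have hjN : j ≤ N := by omega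
    set Dp : ℂ := ∏ k ∈ Finset.Icc (j + 1) N, ((∏ o ∈ Finset.Icc (j + 1) k, l o) - 1) with hDp
    set Dm : ℂ := ∏ k ∈ Finset.Icc 1 j, ((∏ o ∈ Finset.Icc k j, l o) - 1) with hDm
    set W : ℂ := ∏ k ∈ Finset.Icc 2 j, l k ^ (k - 1) with hW
    set Pr : ℂ := ∏ k ∈ Finset.range j, r k with hPr
    have hDpne : Dp ≠ 0 := by
      rw [hDp]
      apply Finset.prod_ne_zero_iff.2
      intro k hk
      rw [Finset.mem_Icc] at hk
      exact sub_ne_zero_of_ne (hzf (j + 1) k (by omega) (by omega) hk.2)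
    have hDmne : Dm ≠ 0 := by
      rw [hDm]
      apply Finset.prod_ne_zero_iff.2
      intro k hk
      rw [Finset.mem_Icc] at hk
      exact sub_ne_zero_of_ne (hzf k j hk.1 hk.2 hjN)
    have hE : ∏ k ∈ (Finset.range (N + 1)).erase j, (r j - r k)
        = Pr * Dm * ((-1 : ℂ) ^ (N - j) * r j ^ (N - j) * Dp) := by
      rw [hsplit j hjN, Finset.prod_union (hdisj j), hlow j hjN, hup j hjN]
    have hEne : (∏ k ∈ (Finset.range (N + 1)).erase j, (r j - r k)) ≠ 0 := by
      apply Finset.prod_ne_zero_iff.2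
      intro k hk
      rw [Finset.mem_erase, Finset.mem_range] at hk
      rcases lt_or_gt_of_ne hk.1.symm with h | h
      · rw [← neg_sub]
        exact neg_ne_zero.2 (hdne j k h (by omega))
      · exact hdne k j h hjN
    have hsgn : (-1 : ℂ) ^ (N - j) * (-1 : ℂ) ^ j = (-1 : ℂ) ^ N := pow_sub_mul_pow _ hjN
    have hrpow : r j ^ (N - j) * r j ^ (j - 1) = r j ^ (N - 1) := by
      rcases Nat.eq_zero_or_pos j with h0 | hpos
      · subst h0; simp [hr0]
      · rw [← pow_add]
        congr 1
        omega
    have key : (-1 : ℂ) ^ j * W * (Pr * Dm * ((-1 : ℂ) ^ (N - j) * r j ^ (N - j) * Dp))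
        = (-1 : ℂ) ^ N * r j ^ (N - 1) * (Dp * Dm) := by
      have h1 : Pr * W = r j ^ (j - 1) := hw j
      calc (-1 : ℂ) ^ j * W * (Pr * Dm * ((-1 : ℂ) ^ (N - j) * r j ^ (N - j) * Dp))
          = ((-1 : ℂ) ^ (N - j) * (-1 : ℂ) ^ j) * (Pr * W)
            * r j ^ (N - j) * (Dp * Dm) := by ring
        _ = (-1 : ℂ) ^ N * r j ^ (j - 1) * r j ^ (N - j) * (Dp * Dm) := by rw [hsgn, h1]
        _ = (-1 : ℂ) ^ N * (r j ^ (N - j) * r j ^ (j - 1)) * (Dp * Dm) := by ring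
        _ = (-1 : ℂ) ^ N * r j ^ (N - 1) * (Dp * Dm) := by rw [hrpow]
    have hgoal : ((-1 : ℂ) ^ j * W) / (Dp * Dm)
        = ((-1 : ℂ) ^ N * r j ^ (N - 1))
          / (∏ k ∈ (Finset.range (N + 1)).erase j, (r j - r k)) := by
      rw [div_eq_div_iff (mul_ne_zero hDpne hDmne) hEne, hE]
      linear_combination key
    rw [hgoal, div_eq_mul_inv]
    ring
  rw [Finset.sum_congr rfl hterm, ← Finset.mul_sum,
    lagrange_zero N hN (Finset.range (N + 1)) (Finset.card_range (N + 1)) r hinj, mul_zero]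

lemma sum_div_eq (s : Finset ℕ) (num den : ℕ → ℂ) (h : ∀ i ∈ s, den i ≠ 0) :
    ∑ j ∈ s, num j / den j
      = (∑ j ∈ s, num j * ∏ i ∈ s.erase j, den i) / ∏ i ∈ s, den i := by
  rw [Finset.sum_div]
  apply Finset.sum_congr rfl
  intro j hj
  rw [← Finset.mul_prod_erase s den hj]
  have hE : (∏ i ∈ s.erase j, den i) ≠ 0 :=
    Finset.prod_ne_zero_iff.2 fun i hi => h i (Finset.mem_of_mem_erase hi)
  rw [mul_comm (den j), mul_comm (num j)]
  exact (mul_div_mul_left _ _ hE).symm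

lemma sum_zero (N : ℕ) (hN : 1 ≤ N) (l : ℕ → ℂ)
    (hzf : ∀ j k : ℕ, 1 ≤ j → j ≤ k → k ≤ N → ∏ o ∈ Finset.Icc j k, l o ≠ 1) :
    ∑ j ∈ Finset.range (N + 1),
        ((-1 : ℂ) ^ j * ∏ k ∈ Finset.Icc 2 j, l k ^ (k - 1))
          / ((∏ k ∈ Finset.Icc (j + 1) N, ((∏ o ∈ Finset.Icc (j + 1) k, l o) - 1))
              * ∏ k ∈ Finset.Icc 1 j, ((∏ o ∈ Finset.Icc k j, l o) - 1)) = 0 := by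
  classical
  set A : ℕ → Polynomial ℂ := fun i => if l i = 0 then X else C (l i) with hA
  have hAeval0 : ∀ i, (A i).eval 0 = l i := by
    intro i
    by_cases h : l i = 0 <;> simp [hA, h]
  have hAne : ∀ i, A i ≠ 0 := by
    intro i
    by_cases h : l i = 0 <;> simp [hA, h, X_ne_zero]
  -- the bad set
  set BAD : Set ℂ :=
    (⋃ i ∈ Finset.Icc 1 N, {t : ℂ | (A i).eval t = 0}) ∪
      ⋃ p ∈ Finset.Icc 1 N ×ˢ Finset.Icc 1 N,
        {t : ℂ | (∏ o ∈ Finset.Icc p.1 p.2, A o).eval t = 1} ∩ {t | p.1 ≤ p.2} with hBAD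
  have hBADfin : BAD.Finite := by
    apply Set.Finite.union
    · apply Set.Finite.biUnion (Finset.Icc 1 N).finite_toSet
      intro i _
      exact Polynomial.finite_setOf_isRoot (hAne i)
    · apply Set.Finite.biUnion ((Finset.Icc 1 N) ×ˢ (Finset.Icc 1 N)).finite_toSet
      intro p hp
      rw [Finset.mem_coe, Finset.mem_product, Finset.mem_Icc, Finset.mem_Icc] at hp
      by_cases hab : p.1 ≤ p.2
      · apply Set.Finite.inter_of_left
        have hpne : (∏ o ∈ Finset.Icc p.1 p.2, A o) - C 1 ≠ 0 := by
          intro hcon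
          have := congrArg (Polynomial.eval 0) hcon
          simp only [eval_sub, eval_C, eval_zero, Polynomial.eval_prod, sub_eq_zero] at this
          simp only [hAeval0] at this
          exact hzf p.1 p.2 hp.1.1 hab hp.2.2 this
        have : {t : ℂ | (∏ o ∈ Finset.Icc p.1 p.2, A o).eval t = 1}
            ⊆ {t : ℂ | IsRoot ((∏ o ∈ Finset.Icc p.1 p.2, A o) - C 1) t} := by
          intro t ht
          simp only [Set.mem_setOf_eq, IsRoot, eval_sub, eval_C] at ht ⊢
          rw [ht, sub_self]
        exact (Polynomial.finite_setOf_isRoot hpne).subset this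
      · have : {t : ℂ | (∏ o ∈ Finset.Icc p.1 p.2, A o).eval t = 1} ∩ {t | p.1 ≤ p.2} = ∅ := by
          ext t; simp [hab]
        rw [this]
        exact Set.finite_empty
  -- the polynomial clearing denominators
  set PNum : ℕ → Polynomial ℂ := fun j => (-1) ^ j * ∏ k ∈ Finset.Icc 2 j, (A k) ^ (k - 1)
    with hPNum
  set PDen : ℕ → Polynomial ℂ := fun j =>
      (∏ k ∈ Finset.Icc (j + 1) N, ((∏ o ∈ Finset.Icc (j + 1) k, A o) - 1))
        * ∏ k ∈ Finset.Icc 1 j, ((∏ o ∈ Finset.Icc k j, A o) - 1) with hPDen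
  set P : Polynomial ℂ := ∑ j ∈ Finset.range (N + 1),
      PNum j * ∏ i ∈ (Finset.range (N + 1)).erase j, PDen i with hP
  -- evaluation of P
  have hPeval : ∀ t : ℂ, P.eval t
      = ∑ j ∈ Finset.range (N + 1),
          ((-1 : ℂ) ^ j * ∏ k ∈ Finset.Icc 2 j, ((A k).eval t) ^ (k - 1))
            * ∏ i ∈ (Finset.range (N + 1)).erase j,
              ((∏ k ∈ Finset.Icc (i + 1) N, ((∏ o ∈ Finset.Icc (i + 1) k, (A o).eval t) - 1))
                * ∏ k ∈ Finset.Icc 1 i, ((∏ o ∈ Finset.Icc k i, (A o).eval t) - 1)) := by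
    intro t
    rw [hP, Polynomial.eval_finset_sum]
    apply Finset.sum_congr rfl
    intro j _
    simp [hPNum, hPDen, Polynomial.eval_prod]
  -- nonvanishing of denominators at good points
  have hDenNe : ∀ t : ℂ, t ∉ BAD → ∀ i : ℕ, i ≤ N →
      ((∏ k ∈ Finset.Icc (i + 1) N, ((∏ o ∈ Finset.Icc (i + 1) k, (A o).eval t) - 1))
        * ∏ k ∈ Finset.Icc 1 i, ((∏ o ∈ Finset.Icc k i, (A o).eval t) - 1)) ≠ 0 := by
    intro t ht i hiN
    have hzf' : ∀ a b : ℕ, 1 ≤ a → a ≤ b → b ≤ N →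
        (∏ o ∈ Finset.Icc a b, (A o).eval t) ≠ 1 := by
      intro a b ha hab hb hcon
      apply ht
      rw [hBAD]
      right
      simp only [Set.mem_iUnion, Finset.mem_coe, Finset.mem_product, Finset.mem_Icc]
      refine ⟨(a, b), ⟨⟨ha, hab.trans hb⟩, ⟨by omega, hb⟩⟩, ?_⟩
      constructor
      · rw [Set.mem_setOf_eq, Polynomial.eval_prod]
        exact hcon
      · exact hab
    apply mul_ne_zero
    · apply Finset.prod_ne_zero_iff.2
      intro k hk
      rw [Finset.mem_Icc] at hk
      exact sub_ne_zero_of_ne (hzf' (i + 1) k (by omega) (by omega) hk.2)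
    · apply Finset.prod_ne_zero_iff.2
      intro k hk
      rw [Finset.mem_Icc] at hk
      exact sub_ne_zero_of_ne (hzf' k i hk.1 hk.2 hiN)
  -- also need: coordinates nonzero at good points
  have hCoordNe : ∀ t : ℂ, t ∉ BAD → ∀ o : ℕ, 1 ≤ o → o ≤ N → (A o).eval t ≠ 0 := by
    intro t ht o h1 h2 hcon
    apply ht
    rw [hBAD]
    left
    simp only [Set.mem_iUnion, Finset.mem_coe, Finset.mem_Icc]
    exact ⟨o, ⟨h1, h2⟩, hcon⟩
  -- P vanishes off BAD
  have hPzero : ∀ t : ℂ, t ∉ BAD → P.eval t = 0 := by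
    intro t ht
    have h0 := sum_zero_of_ne_zero N hN (fun i => (A i).eval t)
      (fun a b ha hab hb => by
        intro hcon
        apply ht
        rw [hBAD]
        right
        simp only [Set.mem_iUnion, Finset.mem_coe, Finset.mem_product, Finset.mem_Icc]
        refine ⟨(a, b), ⟨⟨ha, hab.trans hb⟩, ⟨by omega, hb⟩⟩, ?_, hab⟩
        rw [Set.mem_setOf_eq, Polynomial.eval_prod]
        exact hcon)
      (hCoordNe t ht)
    rw [sum_div_eq _ _ _ (fun i hi => hDenNe t ht i (by
      rw [Finset.mem_range] at hi; omega))] at h0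
    rcases div_eq_zero_iff.1 h0 with h | h
    · rw [hPeval t]
      exact h
    · exact absurd h (Finset.prod_ne_zero_iff.2 fun i hi =>
        hDenNe t ht i (by rw [Finset.mem_range] at hi; omega))
  -- hence P = 0
  have hP0 : P = 0 := by
    apply Polynomial.eq_zero_of_infinite_isRoot
    apply Set.Infinite.mono (s := BADᶜ)
    · intro t ht
      exact hPzero t ht
    · exact Set.Finite.infinite_compl hBADfin
  -- evaluate at 0
  have hzero : P.eval 0 = 0 := by rw [hP0, Polynomial.eval_zero]
  rw [hPeval 0] at hzero
  simp only [hAeval0] at hzero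
  have hDenl : ∀ i : ℕ, i ∈ Finset.range (N + 1) →
      ((∏ k ∈ Finset.Icc (i + 1) N, ((∏ o ∈ Finset.Icc (i + 1) k, l o) - 1))
        * ∏ k ∈ Finset.Icc 1 i, ((∏ o ∈ Finset.Icc k i, l o) - 1)) ≠ 0 := by
    intro i hi
    rw [Finset.mem_range] at hi
    apply mul_ne_zero
    · apply Finset.prod_ne_zero_iff.2
      intro k hk
      rw [Finset.mem_Icc] at hk
      exact sub_ne_zero_of_ne (hzf (i + 1) k (by omega) (by omega) hk.2)
    · apply Finset.prod_ne_zero_iff.2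
      intro k hk
      rw [Finset.mem_Icc] at hk
      exact sub_ne_zero_of_ne (hzf k i hk.1 hk.2 (by omega))
  rw [sum_div_eq _ _ _ hDenl, hzero, zero_div]

noncomputable def Fc (N L : ℕ) (l : ℕ → ℂ) : ℂ :=
  ∑ j ∈ Finset.range (N + 1),
    ((-1 : ℂ) ^ j * (∏ k ∈ Finset.Icc (j + 1) N, l k) ^ L
        * ∏ k ∈ Finset.Icc 2 j, l k ^ (k - 1))
      / ((∏ k ∈ Finset.Icc (j + 1) N, ((∏ o ∈ Finset.Icc (j + 1) k, l o) - 1))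
          * ∏ k ∈ Finset.Icc 1 j, ((∏ o ∈ Finset.Icc k j, l o) - 1))

lemma Fc_zero (L : ℕ) (l : ℕ → ℂ) : Fc 0 L l = 1 := by
  unfold Fc
  norm_num

lemma Fc_succ (n L : ℕ) (l : ℕ → ℂ)
    (hzf : ∀ j k : ℕ, 1 ≤ j → j ≤ k → k ≤ n + 1 → ∏ o ∈ Finset.Icc j k, l o ≠ 1) :
    Fc (n + 1) (L + 1) l = Fc (n + 1) L l + l (n + 1) ^ L * Fc n L l := by
  unfold Fc
  rw [Finset.sum_range_succ, Finset.sum_range_succ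
    (f := fun j => ((-1 : ℂ) ^ j * (∏ k ∈ Finset.Icc (j + 1) (n + 1), l k) ^ L
        * ∏ k ∈ Finset.Icc 2 j, l k ^ (k - 1))
      / ((∏ k ∈ Finset.Icc (j + 1) (n + 1), ((∏ o ∈ Finset.Icc (j + 1) k, l o) - 1))
          * ∏ k ∈ Finset.Icc 1 j, ((∏ o ∈ Finset.Icc k j, l o) - 1))),
    Finset.mul_sum]
  have hempty : Finset.Icc (n + 1 + 1) (n + 1) = (∅ : Finset ℕ) :=
    Finset.Icc_eq_empty (by omega)
  have htop : ((-1 : ℂ) ^ (n + 1) * (∏ k ∈ Finset.Icc (n + 1 + 1) (n + 1), l k) ^ (L + 1)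
        * ∏ k ∈ Finset.Icc 2 (n + 1), l k ^ (k - 1))
      / ((∏ k ∈ Finset.Icc (n + 1 + 1) (n + 1), ((∏ o ∈ Finset.Icc (n + 1 + 1) k, l o) - 1))
          * ∏ k ∈ Finset.Icc 1 (n + 1), ((∏ o ∈ Finset.Icc k (n + 1), l o) - 1))
      = ((-1 : ℂ) ^ (n + 1) * (∏ k ∈ Finset.Icc (n + 1 + 1) (n + 1), l k) ^ L
        * ∏ k ∈ Finset.Icc 2 (n + 1), l k ^ (k - 1))
      / ((∏ k ∈ Finset.Icc (n + 1 + 1) (n + 1), ((∏ o ∈ Finset.Icc (n + 1 + 1) k, l o) - 1))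
          * ∏ k ∈ Finset.Icc 1 (n + 1), ((∏ o ∈ Finset.Icc k (n + 1), l o) - 1)) := by
    rw [hempty]
    simp
  rw [htop]
  have hterm : ∀ j ∈ Finset.range (n + 1),
      ((-1 : ℂ) ^ j * (∏ k ∈ Finset.Icc (j + 1) (n + 1), l k) ^ (L + 1)
          * ∏ k ∈ Finset.Icc 2 j, l k ^ (k - 1))
        / ((∏ k ∈ Finset.Icc (j + 1) (n + 1), ((∏ o ∈ Finset.Icc (j + 1) k, l o) - 1))
            * ∏ k ∈ Finset.Icc 1 j, ((∏ o ∈ Finset.Icc k j, l o) - 1))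
      = ((-1 : ℂ) ^ j * (∏ k ∈ Finset.Icc (j + 1) (n + 1), l k) ^ L
          * ∏ k ∈ Finset.Icc 2 j, l k ^ (k - 1))
        / ((∏ k ∈ Finset.Icc (j + 1) (n + 1), ((∏ o ∈ Finset.Icc (j + 1) k, l o) - 1))
            * ∏ k ∈ Finset.Icc 1 j, ((∏ o ∈ Finset.Icc k j, l o) - 1))
        + l (n + 1) ^ L * (((-1 : ℂ) ^ j * (∏ k ∈ Finset.Icc (j + 1) n, l k) ^ L
          * ∏ k ∈ Finset.Icc 2 j, l k ^ (k - 1))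
        / ((∏ k ∈ Finset.Icc (j + 1) n, ((∏ o ∈ Finset.Icc (j + 1) k, l o) - 1))
            * ∏ k ∈ Finset.Icc 1 j, ((∏ o ∈ Finset.Icc k j, l o) - 1))) := by
    intro j hj
    rw [Finset.mem_range] at hj
    have hsplitQ : ∏ k ∈ Finset.Icc (j + 1) (n + 1), l k
        = (∏ k ∈ Finset.Icc (j + 1) n, l k) * l (n + 1) :=
      Finset.prod_Icc_succ_top (by omega) l
    have hsplitD : ∏ k ∈ Finset.Icc (j + 1) (n + 1), ((∏ o ∈ Finset.Icc (j + 1) k, l o) - 1)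
        = (∏ k ∈ Finset.Icc (j + 1) n, ((∏ o ∈ Finset.Icc (j + 1) k, l o) - 1))
          * ((∏ k ∈ Finset.Icc (j + 1) n, l k) * l (n + 1) - 1) := by
      rw [Finset.prod_Icc_succ_top (by omega), hsplitQ]
    have hDp : (∏ k ∈ Finset.Icc (j + 1) n, ((∏ o ∈ Finset.Icc (j + 1) k, l o) - 1)) ≠ 0 := by
      apply Finset.prod_ne_zero_iff.2
      intro k hk
      rw [Finset.mem_Icc] at hk
      exact sub_ne_zero_of_ne (hzf (j + 1) k (by omega) (by omega) (by omega))
    have hDm : (∏ k ∈ Finset.Icc 1 j, ((∏ o ∈ Finset.Icc k j, l o) - 1)) ≠ 0 := by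
      apply Finset.prod_ne_zero_iff.2
      intro k hk
      rw [Finset.mem_Icc] at hk
      exact sub_ne_zero_of_ne (hzf k j hk.1 hk.2 (by omega))
    have hQ1 : (∏ k ∈ Finset.Icc (j + 1) n, l k) * l (n + 1) - 1 ≠ 0 := by
      rw [← hsplitQ]
      exact sub_ne_zero_of_ne (hzf (j + 1) (n + 1) (by omega) (by omega) (by omega))
    rw [hsplitQ, hsplitD]
    field_simp
    ring
  rw [Finset.sum_congr rfl hterm, Finset.sum_add_distrib]
  ring


lemma Fc_len_zero (n : ℕ) (l : ℕ → ℂ)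
    (hzf : ∀ j k : ℕ, 1 ≤ j → j ≤ k → k ≤ n + 1 → ∏ o ∈ Finset.Icc j k, l o ≠ 1) :
    Fc (n + 1) 0 l = 0 := by
  have h := sum_zero (n + 1) (by omega) l hzf
  rw [← h]
  unfold Fc
  apply Finset.sum_congr rfl
  intro j _
  rw [pow_zero, mul_one]

end Aux

/-- The kinematical sum over strictly increasing `N`-tuples of positions in
`{0, …, L-1}`, with 1-based particle labels: particle `i : Fin N` carries the
amplitude `l (i+1)`. -/
noncomputable def Bstrict (N L : ℕ) (l : ℕ → ℂ) : ℂ :=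
  ∑ x ∈ (Fintype.piFinset fun _ : Fin N => Finset.range L).filter
      (fun x => ∀ i j : Fin N, i < j → x i < x j),
    ∏ i : Fin N, l ((i : ℕ) + 1) ^ x i

lemma Bstrict_zero (L : ℕ) (l : ℕ → ℂ) : Bstrict 0 L l = 1 := by
  unfold Bstrict
  rw [Finset.filter_true_of_mem (fun x _ => fun i => i.elim0)]
  rw [Finset.sum_congr rfl (fun x _ => Finset.prod_of_isEmpty _)]
  simp [Fintype.card_piFinset]

lemma Bstrict_len_zero (n : ℕ) (l : ℕ → ℂ) : Bstrict (n + 1) 0 l = 0 := by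
  unfold Bstrict
  apply Finset.sum_eq_zero
  intro x hx
  rw [Finset.mem_filter, Fintype.mem_piFinset] at hx
  exact absurd (hx.1 0) (by simp)

lemma Bstrict_succ (n L : ℕ) (l : ℕ → ℂ) :
    Bstrict (n + 1) (L + 1) l
      = Bstrict (n + 1) L l + l (n + 1) ^ L * Bstrict n L l := by
  classical
  unfold Bstrict
  rw [← Finset.sum_filter_add_sum_filter_not
    ((Fintype.piFinset fun _ : Fin (n+1) => Finset.range (L+1)).filter
      (fun x => ∀ i j : Fin (n+1), i < j → x i < x j))
    (fun x => x (Fin.last n) = L)]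
  rw [add_comm]
  congr 1
  · -- the part with x last ≠ L equals Bstrict (n+1) L
    apply Finset.sum_congr
    · ext x
      simp only [Finset.mem_filter, Fintype.mem_piFinset, Finset.mem_range]
      constructor
      · rintro ⟨⟨h1, h2⟩, h3⟩
        have hlast : x (Fin.last n) < L := by
          have := h1 (Fin.last n)
          omega
        refine ⟨fun i => ?_, h2⟩
        rcases Fin.eq_castSucc_or_eq_last i with ⟨j, rfl⟩ | rfl
        · exact lt_trans (h2 _ _ (Fin.castSucc_lt_last j)) hlast
        · exact hlast
      · rintro ⟨h1, h2⟩
        have hlast : x (Fin.last n) < L := h1 _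
        exact ⟨⟨fun i => by have := h1 i; omega, h2⟩, by omega⟩
    · intro x _
      rfl
  · -- the part with x last = L
    rw [Finset.mul_sum]
    apply Finset.sum_nbij' (i := fun x => x ∘ Fin.castSucc)
      (j := fun y => Fin.snoc y L)
    · -- maps into
      intro x hx
      simp only [Finset.mem_filter, Fintype.mem_piFinset, Finset.mem_range] at hx ⊢
      obtain ⟨⟨h1, h2⟩, h3⟩ := hx
      refine ⟨fun i => ?_, fun i j hij => h2 _ _ (by simpa using hij)⟩
      have := h2 (Fin.castSucc i) (Fin.last n) (Fin.castSucc_lt_last i)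
      simp only [Function.comp_apply]
      omega
    · -- maps back
      intro y hy
      simp only [Finset.mem_filter, Fintype.mem_piFinset, Finset.mem_range] at hy ⊢
      obtain ⟨h1, h2⟩ := hy
      refine ⟨⟨fun i => ?_, fun i j hij => ?_⟩, by simp⟩
      · rcases Fin.eq_castSucc_or_eq_last i with ⟨i', rfl⟩ | rfl
        · rw [Fin.snoc_castSucc]
          exact lt_trans (h1 i') (Nat.lt_succ_self L)
        · simp
      · rcases Fin.eq_castSucc_or_eq_last j with ⟨j', rfl⟩ | rfl
        · rcases Fin.eq_castSucc_or_eq_last i with ⟨i', rfl⟩ | rfl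
          · rw [Fin.snoc_castSucc, Fin.snoc_castSucc]
            exact h2 i' j' (by simpa using hij)
          · exact absurd (hij.trans (Fin.castSucc_lt_last j')) (lt_irrefl _)
        · rcases Fin.eq_castSucc_or_eq_last i with ⟨i', rfl⟩ | rfl
          · rw [Fin.snoc_castSucc, Fin.snoc_last]
            exact h1 i'
          · exact absurd hij (lt_irrefl _)
    · -- left inverse
      intro x hx
      simp only [Finset.mem_filter] at hx
      funext i
      rcases Fin.eq_castSucc_or_eq_last i with ⟨i', rfl⟩ | rfl
      · rw [Fin.snoc_castSucc]
        rfl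
      · rw [Fin.snoc_last]
        exact hx.2.symm
    · -- right inverse
      intro y _
      funext i
      simp
    · -- values
      intro x hx
      simp only [Finset.mem_filter] at hx
      rw [Fin.prod_univ_castSucc, hx.2, mul_comm]
      congr 1


lemma main_aux (N : ℕ) (l : ℕ → ℂ)
    (hzf : ∀ j k : ℕ, 1 ≤ j → j ≤ k → k ≤ N → ∏ o ∈ Finset.Icc j k, l o ≠ 1)
    (L : ℕ) : Bstrict N L l = Fc N L l := by
  induction N generalizing l L with
  | zero => rw [Bstrict_zero, Fc_zero]
  | succ n ih =>
    induction L with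
    | zero => rw [Bstrict_len_zero, Fc_len_zero n l hzf]
    | succ L ihL =>
      rw [Bstrict_succ, ihL, ih l (fun j k h1 h2 h3 => hzf j k h1 h2 (by omega)) L,
        Fc_succ n L l hzf]

theorem strict_closed_form (N : ℕ) (l : ℕ → ℂ)
    (hzf : ∀ j k : ℕ, 1 ≤ j → j ≤ k → k ≤ N → ∏ o ∈ Finset.Icc j k, l o ≠ 1)
    (L : ℕ) (hL : N ≤ L) :
    Bstrict N L l =
      ∑ j ∈ Finset.range (N + 1),
        ((-1 : ℂ) ^ j * (∏ k ∈ Finset.Icc (j + 1) N, l k) ^ L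
            * ∏ k ∈ Finset.Icc 2 j, l k ^ (k - 1))
          / ((∏ k ∈ Finset.Icc (j + 1) N, ((∏ o ∈ Finset.Icc (j + 1) k, l o) - 1))
              * ∏ k ∈ Finset.Icc 1 j, ((∏ o ∈ Finset.Icc k j, l o) - 1)) :=
  main_aux N l hzf L
end

section
/- Let $l_1, \dots, l_N$ be complex numbers such that every consecutive product $l_j l_{j+1} \cdots l_k \neq 1$ for $1 \le j \le k \le N$. Then for every $L \geq 1$, $\sum_{0 \le x_1 \le \cdots \le x_N \le L-1} \prod_{i=1}^N l_i^{x_i} = \sum_{j=0}^N \frac{(-1)^j \prod_{k=j+1}^N l_k^L \, l_k^{N-k}}{\prod_{k=j+1}^N \left(\prod_{o=j+1}^k l_o - 1\right) \cdot \prod_{k=1}^j \left(\prod_{o=k}^j l_o - 1\right)}$. -/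
open Complex Finset

/-- The kinematical sum over weakly increasing `N`-tuples of positions in
`{0, …, L-1}`, with 1-based particle labels: particle `i : Fin N` carries the
amplitude `l (i+1)`. -/
noncomputable def Bweak (N L : ℕ) (l : ℕ → ℂ) : ℂ :=
  ∑ x ∈ (Fintype.piFinset fun _ : Fin N => Finset.range L).filter
      (fun x => ∀ i j : Fin N, i ≤ j → x i ≤ x j),
    ∏ i : Fin N, l ((i : ℕ) + 1) ^ x i

def low (M : ℕ) (y : Fin M → ℕ) : ℕ := if h : 0 < M then y ⟨M - 1, by omega⟩ else 0

lemma Bweak_succ (M L : ℕ) (l : ℕ → ℂ) (hq : l (M+1) ≠ 1) (hL : 1 ≤ L) :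
    Bweak (M+1) L l = (l (M+1)^L * Bweak M L l
      - Bweak M L (Function.update l M (l M * l (M+1)))) / (l (M+1) - 1) := by
  set S := (Fintype.piFinset fun _ : Fin M => Finset.range L).filter
      (fun x => ∀ i j : Fin M, i ≤ j → x i ≤ x j) with hS
  have hmemS : ∀ y ∈ S, (∀ i : Fin M, y i < L) ∧ (∀ i j : Fin M, i ≤ j → y i ≤ y j) := by
    intro y hy
    rw [hS, Finset.mem_filter, Fintype.mem_piFinset] at hy
    exact ⟨fun i => by simpa using hy.1 i, hy.2⟩
  have hlowL : ∀ y ∈ S, low M y ≤ L := by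
    intro y hy
    unfold low
    split
    · exact ((hmemS y hy).1 _).le
    · omega
  have key : Bweak (M+1) L l
      = ∑ y ∈ S, ∑ t ∈ Finset.Ico (low M y) L,
          (∏ i : Fin M, l ((i : ℕ) + 1) ^ y i) * l (M + 1) ^ t := by
    rw [Finset.sum_sigma' S (fun y => Finset.Ico (low M y) L), Bweak]
    apply Finset.sum_bij' (i := fun x _ => (⟨Fin.init x, x (Fin.last M)⟩ : (_ : Fin M → ℕ) × ℕ))
      (j := fun p _ => Fin.snoc p.1 p.2)
    case hi =>
      intro x hx
      rw [Finset.mem_filter, Fintype.mem_piFinset] at hx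
      rw [Finset.mem_sigma]
      refine ⟨?_, ?_⟩
      · rw [hS, Finset.mem_filter, Fintype.mem_piFinset]
        refine ⟨fun i => by simpa [Fin.init] using hx.1 i.castSucc,
          fun i j hij => by
            simpa [Fin.init] using hx.2 _ _ (Fin.castSucc_le_castSucc_iff.mpr hij)⟩
      · rw [Finset.mem_Ico]
        refine ⟨?_, by simpa using hx.1 (Fin.last M)⟩
        unfold low
        split
        · exact hx.2 _ _ (Fin.le_last _)
        · omega
    case hj =>
      intro p hp
      rw [Finset.mem_sigma, Finset.mem_Ico] at hp
      obtain ⟨hp1, hp2⟩ := hp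
      obtain ⟨hv, hmono⟩ := hmemS _ hp1
      rw [Finset.mem_filter, Fintype.mem_piFinset]
      refine ⟨?_, ?_⟩
      · intro i
        refine Fin.lastCases ?_ ?_ i
        · rw [Fin.snoc_last]; exact Finset.mem_range.2 hp2.2
        · intro i'
          rw [Fin.snoc_castSucc]; exact Finset.mem_range.2 (hv i')
      · intro i j hij
        rcases Fin.eq_castSucc_or_eq_last i with ⟨i', rfl⟩ | rfl <;>
          rcases Fin.eq_castSucc_or_eq_last j with ⟨j', rfl⟩ | rfl
        · rw [Fin.snoc_castSucc, Fin.snoc_castSucc]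
          exact hmono i' j' (Fin.castSucc_le_castSucc_iff.mp hij)
        · rw [Fin.snoc_castSucc, Fin.snoc_last]
          have hM : 0 < M := i'.pos
          have h1 : p.1 i' ≤ p.1 ⟨M - 1, by omega⟩ := by
            apply hmono
            rw [Fin.le_def]
            have := i'.isLt
            simp only [Fin.val_mk]
            omega
          have h2 : low M p.1 = p.1 ⟨M - 1, by omega⟩ := dif_pos hM
          exact h1.trans (h2 ▸ hp2.1)
        · exact absurd hij (by rw [Fin.le_def, not_le]; have := j'.isLt; simp only [Fin.val_last, Fin.coe_castSucc]; omega)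
        · exact le_refl _
    case left_neg => intro x hx; exact Fin.snoc_init_self x
    case right_neg =>
      intro p hp
      exact Sigma.ext (by simp [Fin.init_snoc]) (by simp [Fin.snoc_last])
    case h =>
      intro x hx
      rw [Fin.prod_univ_castSucc (f := fun i => l ((i : ℕ) + 1) ^ x i)]
      simp [Fin.init]
  rw [key]
  have step : ∀ y ∈ S, ∑ t ∈ Finset.Ico (low M y) L, (∏ i : Fin M, l ((i:ℕ)+1)^ y i) * l (M+1)^t
      = (l (M+1)^L * (∏ i : Fin M, l ((i:ℕ)+1) ^ y i)
         - (∏ i : Fin M, (Function.update l M (l M * l (M+1))) ((i:ℕ)+1) ^ y i)) / (l (M+1) - 1) := by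
    intro y hy
    rw [← Finset.mul_sum, geom_sum_Ico hq (hlowL y hy)]
    have hup : (∏ i : Fin M, (Function.update l M (l M * l (M+1))) ((i:ℕ)+1) ^ y i)
        = (∏ i : Fin M, l ((i:ℕ)+1) ^ y i) * l (M+1) ^ (low M y) := by
      cases M with
      | zero => simp [low]
      | succ m =>
        rw [Fin.prod_univ_castSucc
            (f := fun i => (Function.update l (m+1) (l (m+1) * l (m+1+1))) ((i:ℕ)+1) ^ y i),
          Fin.prod_univ_castSucc (f := fun i => l ((i:ℕ)+1) ^ y i)]
        have h1 : ∀ i : Fin m, (Function.update l (m+1) (l (m+1) * l (m+1+1))) ((i.castSucc:ℕ)+1)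
            = l ((i.castSucc:ℕ)+1) := by
          intro i
          apply Function.update_of_ne
          have := i.isLt
          simp only [Fin.coe_castSucc]
          omega
        rw [Finset.prod_congr rfl (fun i _ => by rw [h1 i])]
        have h2 : (Function.update l (m+1) (l (m+1) * l (m+1+1))) ((Fin.last m : ℕ)+1)
            = l (m+1) * l (m+1+1) := by
          rw [Fin.val_last]
          exact Function.update_self _ _ _
        rw [h2]
        have h3 : low (m+1) y = y (Fin.last m) := by
          rw [low, dif_pos (Nat.succ_pos m)]
          exact congrArg y (Fin.ext (by simp))
        rw [h3, mul_pow]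
        simp only [Fin.val_last]
        ring
    rw [hup]
    ring
  rw [Finset.sum_congr rfl step, ← Finset.sum_div, Finset.sum_sub_distrib, ← Finset.mul_sum,
    Bweak, Bweak]

lemma prod_Icc_top (f : ℕ → ℂ) {a b : ℕ} (hb : 1 ≤ b) (h : a ≤ b) :
    ∏ k ∈ Finset.Icc a b, f k = (∏ k ∈ Finset.Icc a (b - 1), f k) * f b := by
  cases b with
  | zero => omega
  | succ c => simpa using Finset.prod_Icc_succ_top h f

lemma upd_prod_lt (M : ℕ) (l : ℕ → ℂ) {a b : ℕ} (hb : b < M) :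
    ∏ o ∈ Finset.Icc a b, Function.update l M (l M * l (M+1)) o = ∏ o ∈ Finset.Icc a b, l o :=
  Finset.prod_congr rfl fun o ho =>
    Function.update_of_ne (by rw [Finset.mem_Icc] at ho; omega) _ _

lemma upd_prod_eq (M : ℕ) (l : ℕ → ℂ) {a : ℕ} (ha : a ≤ M) :
    ∏ o ∈ Finset.Icc a M, Function.update l M (l M * l (M+1)) o
      = ∏ o ∈ Finset.Icc a (M+1), l o := by
  rw [Finset.prod_Icc_succ_top (by omega),
    Finset.prod_update_of_mem (Finset.mem_Icc.2 ⟨ha, le_rfl⟩),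
    Finset.sdiff_singleton_eq_erase, mul_comm (l M) (l (M+1)), mul_assoc,
    Finset.mul_prod_erase _ _ (Finset.mem_Icc.2 ⟨ha, le_rfl⟩)]
  ring

lemma term_lt (M L j : ℕ) (l : ℕ → ℂ) (hj : j < M)
    (hzf : ∀ a b : ℕ, 1 ≤ a → a ≤ b → b ≤ M+1 → ∏ o ∈ Finset.Icc a b, l o ≠ 1) :
    ((-1 : ℂ) ^ j * ∏ k ∈ Finset.Icc (j + 1) (M+1), l k ^ L * l k ^ (M + 1 - k))
        / ((∏ k ∈ Finset.Icc (j + 1) (M+1), ((∏ o ∈ Finset.Icc (j + 1) k, l o) - 1))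
            * ∏ k ∈ Finset.Icc 1 j, ((∏ o ∈ Finset.Icc k j, l o) - 1)) * (l (M+1) - 1)
      = l (M+1) ^ L *
          (((-1 : ℂ) ^ j * ∏ k ∈ Finset.Icc (j + 1) M, l k ^ L * l k ^ (M - k))
            / ((∏ k ∈ Finset.Icc (j + 1) M, ((∏ o ∈ Finset.Icc (j + 1) k, l o) - 1))
                * ∏ k ∈ Finset.Icc 1 j, ((∏ o ∈ Finset.Icc k j, l o) - 1)))
        - ((-1 : ℂ) ^ j * ∏ k ∈ Finset.Icc (j + 1) M,
              (Function.update l M (l M * l (M+1))) k ^ L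
                * (Function.update l M (l M * l (M+1))) k ^ (M - k))
            / ((∏ k ∈ Finset.Icc (j + 1) M,
                  ((∏ o ∈ Finset.Icc (j + 1) k, (Function.update l M (l M * l (M+1))) o) - 1))
                * ∏ k ∈ Finset.Icc 1 j,
                  ((∏ o ∈ Finset.Icc k j, (Function.update l M (l M * l (M+1))) o) - 1)) := by
  have hM1 : 1 ≤ M := by omega
  have hne : ∀ a b : ℕ, 1 ≤ a → a ≤ b → b ≤ M+1 → ((∏ o ∈ Finset.Icc a b, l o) - 1) ≠ 0 :=
    fun a b h1 h2 h3 => sub_ne_zero.2 (hzf a b h1 h2 h3)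
  -- numerator split
  have e1 : ∏ k ∈ Finset.Icc (j + 1) (M+1), l k ^ L * l k ^ (M + 1 - k)
      = ((∏ k ∈ Finset.Icc (j + 1) M, l k ^ L * l k ^ (M - k))
          * (∏ o ∈ Finset.Icc (j + 1) M, l o)) * l (M+1) ^ L := by
    rw [Finset.prod_Icc_succ_top (by omega)]
    have h0 : M + 1 - (M + 1) = 0 := by omega
    rw [h0, pow_zero, mul_one, ← Finset.prod_mul_distrib]
    congr 1
    apply Finset.prod_congr rfl
    intro k hk
    rw [Finset.mem_Icc] at hk
    have : M + 1 - k = (M - k) + 1 := by omega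
    rw [this, pow_succ]
    ring
  have e2 : ∏ k ∈ Finset.Icc (j + 1) (M+1), ((∏ o ∈ Finset.Icc (j + 1) k, l o) - 1)
      = (∏ k ∈ Finset.Icc (j + 1) M, ((∏ o ∈ Finset.Icc (j + 1) k, l o) - 1))
          * ((∏ o ∈ Finset.Icc (j + 1) M, l o) * l (M+1) - 1) := by
    rw [Finset.prod_Icc_succ_top (by omega),
      Finset.prod_Icc_succ_top (a := j+1) (b := M) (by omega)]
  have e3 : ∏ k ∈ Finset.Icc (j + 1) M, ((∏ o ∈ Finset.Icc (j + 1) k, l o) - 1)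
      = (∏ k ∈ Finset.Icc (j + 1) (M-1), ((∏ o ∈ Finset.Icc (j + 1) k, l o) - 1))
          * ((∏ o ∈ Finset.Icc (j + 1) M, l o) - 1) :=
    prod_Icc_top _ hM1 (by omega)
  have e3' : ∏ k ∈ Finset.Icc (j + 1) M,
        ((∏ o ∈ Finset.Icc (j + 1) k, (Function.update l M (l M * l (M+1))) o) - 1)
      = (∏ k ∈ Finset.Icc (j + 1) (M-1), ((∏ o ∈ Finset.Icc (j + 1) k, l o) - 1))
          * ((∏ o ∈ Finset.Icc (j + 1) M, l o) * l (M+1) - 1) := by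
    rw [prod_Icc_top _ hM1 (by omega)]
    congr 1
    · apply Finset.prod_congr rfl
      intro k hk
      rw [Finset.mem_Icc] at hk
      rw [upd_prod_lt M l (by omega)]
    · rw [upd_prod_eq M l (by omega), Finset.prod_Icc_succ_top (by omega)]
  have e4 : ∏ k ∈ Finset.Icc (j + 1) M,
        (Function.update l M (l M * l (M+1))) k ^ L
          * (Function.update l M (l M * l (M+1))) k ^ (M - k)
      = (∏ k ∈ Finset.Icc (j + 1) M, l k ^ L * l k ^ (M - k)) * l (M+1) ^ L := by
    rw [prod_Icc_top _ hM1 (by omega),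
      prod_Icc_top (fun k => l k ^ L * l k ^ (M - k)) hM1 (by omega)]
    have h5 : ∏ k ∈ Finset.Icc (j + 1) (M-1),
          (Function.update l M (l M * l (M+1))) k ^ L
            * (Function.update l M (l M * l (M+1))) k ^ (M - k)
        = ∏ k ∈ Finset.Icc (j + 1) (M-1), l k ^ L * l k ^ (M - k) := by
      apply Finset.prod_congr rfl
      intro k hk
      rw [Finset.mem_Icc] at hk
      rw [Function.update_of_ne (by omega)]
    rw [h5, Function.update_self]
    have h6 : M - M = 0 := by omega
    rw [h6, pow_zero, pow_zero, mul_pow]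
    ring
  have e5 : ∏ k ∈ Finset.Icc 1 j,
        ((∏ o ∈ Finset.Icc k j, (Function.update l M (l M * l (M+1))) o) - 1)
      = ∏ k ∈ Finset.Icc 1 j, ((∏ o ∈ Finset.Icc k j, l o) - 1) := by
    apply Finset.prod_congr rfl
    intro k hk
    rw [upd_prod_lt M l (by omega)]
  rw [e1, e2, e3, e3', e4, e5]
  have hd : (∏ k ∈ Finset.Icc 1 j, ((∏ o ∈ Finset.Icc k j, l o) - 1)) ≠ 0 :=
    Finset.prod_ne_zero_iff.2 fun k hk => by
      rw [Finset.mem_Icc] at hk; exact hne k j hk.1 hk.2 (by omega)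
  have hE : (∏ k ∈ Finset.Icc (j + 1) (M-1), ((∏ o ∈ Finset.Icc (j + 1) k, l o) - 1)) ≠ 0 :=
    Finset.prod_ne_zero_iff.2 fun k hk => by
      rw [Finset.mem_Icc] at hk; exact hne (j+1) k (by omega) hk.1 (by omega)
  have hx1 : ((∏ o ∈ Finset.Icc (j + 1) M, l o) - 1) ≠ 0 := hne (j+1) M (by omega) (by omega) (by omega)
  have hxq1 : ((∏ o ∈ Finset.Icc (j + 1) M, l o) * l (M+1) - 1) ≠ 0 := by
    have := hne (j+1) (M+1) (by omega) (by omega) le_rfl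
    rwa [Finset.prod_Icc_succ_top (by omega)] at this
  field_simp
  ring

noncomputable def Rhs (N L : ℕ) (l : ℕ → ℂ) : ℂ :=
  ∑ j ∈ Finset.range (N + 1),
    ((-1 : ℂ) ^ j * ∏ k ∈ Finset.Icc (j + 1) N, l k ^ L * l k ^ (N - k))
      / ((∏ k ∈ Finset.Icc (j + 1) N, ((∏ o ∈ Finset.Icc (j + 1) k, l o) - 1))
          * ∏ k ∈ Finset.Icc 1 j, ((∏ o ∈ Finset.Icc k j, l o) - 1))

lemma Rhs_succ (M L : ℕ) (l : ℕ → ℂ)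
    (hzf : ∀ a b : ℕ, 1 ≤ a → a ≤ b → b ≤ M+1 → ∏ o ∈ Finset.Icc a b, l o ≠ 1) :
    Rhs (M+1) L l = (l (M+1)^L * Rhs M L l
      - Rhs M L (Function.update l M (l M * l (M+1)))) / (l (M+1) - 1) := by
  have hne : ∀ a b : ℕ, 1 ≤ a → a ≤ b → b ≤ M+1 → ((∏ o ∈ Finset.Icc a b, l o) - 1) ≠ 0 :=
    fun a b h1 h2 h3 => sub_ne_zero.2 (hzf a b h1 h2 h3)
  have hq1 : l (M+1) - 1 ≠ 0 := by
    have := hne (M+1) (M+1) (by omega) le_rfl le_rfl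
    simpa using this
  rw [eq_div_iff hq1]
  simp only [Rhs]
  rw [Finset.sum_mul, Finset.mul_sum, ← Finset.sum_sub_distrib]
  conv_lhs => rw [Finset.sum_range_succ, Finset.sum_range_succ]
  conv_rhs => rw [Finset.sum_range_succ]
  rw [add_assoc]
  congr 1
  · exact Finset.sum_congr rfl fun j hj => term_lt M L j l (Finset.mem_range.1 hj) hzf
  · -- top terms
    have hIccM1 : Finset.Icc (M+1) (M+1) = {M+1} := Finset.Icc_self _
    have hIccE : Finset.Icc (M+1+1) (M+1) = ∅ := Finset.Icc_eq_empty (by omega)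
    have hIccE' : Finset.Icc (M+1) M = ∅ := Finset.Icc_eq_empty (by omega)
    have hg : ∏ k ∈ Finset.Icc 1 (M+1), ((∏ o ∈ Finset.Icc k (M+1), l o) - 1)
        = (∏ k ∈ Finset.Icc 1 M, ((∏ o ∈ Finset.Icc k (M+1), l o) - 1)) * (l (M+1) - 1) := by
      rw [Finset.prod_Icc_succ_top (by omega)]
      congr 1
      rw [hIccM1, Finset.prod_singleton]
    have hg' : ∏ k ∈ Finset.Icc 1 M,
          ((∏ o ∈ Finset.Icc k M, (Function.update l M (l M * l (M+1))) o) - 1)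
        = ∏ k ∈ Finset.Icc 1 M, ((∏ o ∈ Finset.Icc k (M+1), l o) - 1) := by
      apply Finset.prod_congr rfl
      intro k hk
      rw [Finset.mem_Icc] at hk
      rw [upd_prod_eq M l hk.2]
    have hd : (∏ k ∈ Finset.Icc 1 M, ((∏ o ∈ Finset.Icc k M, l o) - 1)) ≠ 0 :=
      Finset.prod_ne_zero_iff.2 fun k hk => by
        rw [Finset.mem_Icc] at hk; exact hne k M hk.1 hk.2 (by omega)
    have hgne : (∏ k ∈ Finset.Icc 1 M, ((∏ o ∈ Finset.Icc k (M+1), l o) - 1)) ≠ 0 :=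
      Finset.prod_ne_zero_iff.2 fun k hk => by
        rw [Finset.mem_Icc] at hk; exact hne k (M+1) hk.1 (by omega) le_rfl
    rw [hg, hg', hIccM1, hIccE, hIccE']
    simp only [Finset.prod_singleton, Finset.prod_empty, Finset.Icc_self]
    have h0 : M + 1 - (M+1) = 0 := by omega
    rw [h0, pow_zero, mul_one, pow_succ]
    field_simp
    ring

lemma Bweak_zero (L : ℕ) (l : ℕ → ℂ) : Bweak 0 L l = 1 := by simp [Bweak]

lemma Rhs_zero (L : ℕ) (l : ℕ → ℂ) : Rhs 0 L l = 1 := by simp [Rhs]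

lemma main_aux_s7 (N : ℕ) : ∀ l : ℕ → ℂ,
    (∀ j k : ℕ, 1 ≤ j → j ≤ k → k ≤ N → ∏ o ∈ Finset.Icc j k, l o ≠ 1) →
    ∀ L : ℕ, 1 ≤ L → Bweak N L l = Rhs N L l := by
  induction N with
  | zero => intro l _ L _; rw [Bweak_zero, Rhs_zero]
  | succ M ih =>
    intro l hzf L hL
    have hq : l (M+1) ≠ 1 := by simpa using hzf (M+1) (M+1) (by omega) le_rfl le_rfl
    have hzf1 : ∀ j k : ℕ, 1 ≤ j → j ≤ k → k ≤ M → ∏ o ∈ Finset.Icc j k, l o ≠ 1 :=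
      fun j k h1 h2 h3 => hzf j k h1 h2 (by omega)
    have hzf2 : ∀ a b : ℕ, 1 ≤ a → a ≤ b → b ≤ M →
        ∏ o ∈ Finset.Icc a b, Function.update l M (l M * l (M+1)) o ≠ 1 := by
      intro a b h1 h2 h3
      by_cases hb : b = M
      · rw [hb, upd_prod_eq M l (hb ▸ h2)]
        exact hzf a (M+1) h1 (by omega) le_rfl
      · rw [upd_prod_lt M l (by omega)]
        exact hzf a b h1 h2 (by omega)
    rw [Bweak_succ M L l hq hL, ih l hzf1 L hL,
      ih (Function.update l M (l M * l (M+1))) hzf2 L hL, ← Rhs_succ M L l hzf]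

theorem weak_closed_form (N : ℕ) (l : ℕ → ℂ)
    (hzf : ∀ j k : ℕ, 1 ≤ j → j ≤ k → k ≤ N → ∏ o ∈ Finset.Icc j k, l o ≠ 1)
    (L : ℕ) (hL : 1 ≤ L) :
    Bweak N L l =
      ∑ j ∈ Finset.range (N + 1),
        ((-1 : ℂ) ^ j * ∏ k ∈ Finset.Icc (j + 1) N, l k ^ L * l k ^ (N - k))
          / ((∏ k ∈ Finset.Icc (j + 1) N, ((∏ o ∈ Finset.Icc (j + 1) k, l o) - 1))
              * ∏ k ∈ Finset.Icc 1 j, ((∏ o ∈ Finset.Icc k j, l o) - 1)) :=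
  main_aux_s7 N l hzf L hL
end

section
/- Let $f(u) = (u - i)/u$ and $l(u) = (u - i/2)/(u + i/2)$, and define $F(u) = \frac{1}{2}\left[\frac{f(-2u)}{1 - l(-u)^2} + \frac{f(2u)}{1 - l(u)^2}\right]$. Then $u(\lambda) := \frac{F(\lambda)^2}{f(2\lambda) f(-2\lambda)} = \frac{\lambda^2 + 1/4}{16 \lambda^2}$ for all complex $\lambda$ where the expressions are defined. -/
open Complex

theorem SL2R_Neel_overlap_function (lam : ℂ) (h0 : lam ≠ 0)
    (h1 : lam ≠ I / 2) (h2 : lam ≠ -(I / 2))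
    (f : ℂ → ℂ) (hf : ∀ z, f z = (z - I) / z)
    (l : ℂ → ℂ) (hl : ∀ z, l z = (z - I / 2) / (z + I / 2))
    (F : ℂ → ℂ)
    (hF : ∀ z, F z = (1 / 2) * (f (-2 * z) / (1 - l (-z) ^ 2)
        + f (2 * z) / (1 - l z ^ 2)))
    (hd1 : 1 - l (-lam) ^ 2 ≠ 0) (hd2 : 1 - l lam ^ 2 ≠ 0)
    (hd3 : f (2 * lam) * f (-2 * lam) ≠ 0) :
    F lam ^ 2 / (f (2 * lam) * f (-2 * lam)) =
      (lam ^ 2 + 1 / 4) / (16 * lam ^ 2) := by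
  have hp : lam + I / 2 ≠ 0 := fun h => h2 (by linear_combination h)
  have hm' : -lam + I / 2 ≠ 0 := fun h => h1 (by linear_combination -h)
  have e1 : 1 - l lam ^ 2 = 2 * I * lam / (lam + I / 2) ^ 2 := by
    rw [hl, div_pow, eq_div_iff (pow_ne_zero _ hp), sub_mul,
      div_mul_cancel₀ _ (pow_ne_zero _ hp)]
    ring
  have e2 : 1 - l (-lam) ^ 2 = -(2 * I * lam) / (-lam + I / 2) ^ 2 := by
    rw [hl, div_pow, eq_div_iff (pow_ne_zero _ hm'), sub_mul,
      div_mul_cancel₀ _ (pow_ne_zero _ hm')]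
    ring
  rw [hF, e1, e2]; simp only [hf]
  have a1 : (2*lam : ℂ) - I ≠ 0 := fun h => h1 (by linear_combination h/2)
  have a2 : (-2*lam : ℂ) - I ≠ 0 := fun h => h2 (by linear_combination -h/2)
  have h4 : (1:ℂ) + 4*lam^2 ≠ 0 := by
    intro h
    exact mul_ne_zero a1 a2 (by linear_combination I_sq - h)
  have key2 : lam ^ 4 * 1024 + lam ^ 6 * 4096 ≠ 0 := by
    have e : lam ^ 4 * 1024 + lam ^ 6 * 4096 = 1024 * lam^4 * (1 + 4*lam^2) := by ring
    rw [e]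
    exact mul_ne_zero (mul_ne_zero (by norm_num) (pow_ne_zero _ h0)) h4
  field_simp
  ring_nf
  have a3 : -(lam * 2) - I ≠ 0 := by convert a2 using 1; ring
  field_simp [key2, a3]
  linear_combination (1024*lam^2 - 256) * I_sq - 256 * I_pow_four
end

section
/- Suppose $\tilde{D}: (\mathbb{R}^{N})^{\text{sym}} \times \mathbb{R}^N \to \mathbb{R}$, $(\boldsymbol{\lambda}, \boldsymbol{m}) \mapsto \tilde{D}(\boldsymbol{\lambda},\boldsymbol{m})$, is symmetric under simultaneous permutations of $(\lambda_j, m_j)$, is a polynomial of degree at most $1$ in each $m_j$, vanishes when all $m_j = 0$, and its coefficient of $m_j$ equals $\tilde{D}$ of the remaining $N-1$ pairs with each remaining $m_k$ replaced by $m_k + \varphi^+(\lambda_k, \lambda_j)$, where $\varphi^+(\lambda,\mu) = \varphi(\lambda - \mu) + \varphi(\lambda + \mu)$ for a given even-in-argument-symmetric function $\varphi$. Then $\tilde{D} = \det \tilde{G}$ where $\tilde{G}_{jk} = \delta_{jk}\left[m_j + \sum_{l=1}^N \varphi^+(\lambda_j, \lambda_l)\right] - \varphi^+(\lambda_j, \lambda_k)$.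 -/
open Finset

lemma det_single_row_aux {n : ℕ} (A : Matrix (Fin (n+1)) (Fin (n+1)) ℝ) (j : Fin (n+1)) :
    (A.updateRow j (Pi.single j 1)).det = (A.submatrix j.succAbove j.succAbove).det := by
  rw [Matrix.det_succ_row _ j, Finset.sum_eq_single j]
  · have h1 : ((-1:ℝ))^((j:ℕ)+(j:ℕ)) = 1 := by
      rw [← two_mul, pow_mul]; norm_num
    have h2 : (A.updateRow j (Pi.single j 1)).submatrix j.succAbove j.succAbove
        = A.submatrix j.succAbove j.succAbove := by
      ext k l
      simp [Matrix.updateRow_ne (Fin.succAbove_ne j k)]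
    simp [h1, h2]
  · intro k _ hk
    simp [Pi.single_eq_of_ne hk]
  · simp

/-- Korepin-style uniqueness theorem for the Gaudin-type determinant.
`D n lam m` is a family of functions of `n` pairs `(λ_j, m_j)`; the four
characterizing properties (permutation symmetry, linearity in each `m_j`,
vanishing at `m = 0`, and the recursion for the coefficient of `m_j` with
the modification rule `m_k ↦ m_k + φ⁺(λ_k, λ_j)`) force `D` to equal the
Gaudin-type determinant `det G̃`. -/
theorem korepin_uniqueness (φ : ℝ → ℝ) (hφ : ∀ x, φ (-x) = φ x)
    (D : (n : ℕ) → (Fin n → ℝ) → (Fin n → ℝ) → ℝ)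
    (hbase : ∀ (lam m : Fin 0 → ℝ), D 0 lam m = 1)
    (hsym : ∀ (n : ℕ) (σ : Equiv.Perm (Fin n)) (lam m : Fin n → ℝ),
      D n (lam ∘ σ) (m ∘ σ) = D n lam m)
    (hzero : ∀ (n : ℕ) (lam : Fin (n + 1) → ℝ), D (n + 1) lam 0 = 0)
    (hlin : ∀ (n : ℕ) (lam m : Fin (n + 1) → ℝ) (j : Fin (n + 1)) (t : ℝ),
      D (n + 1) lam (Function.update m j t)
        = D (n + 1) lam (Function.update m j 0)
          + t * D n (lam ∘ j.succAbove)
              (fun k => m (j.succAbove k)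
                + (φ (lam (j.succAbove k) - lam j)
                  + φ (lam (j.succAbove k) + lam j)))) :
    ∀ (n : ℕ) (lam : Fin n → ℝ), Function.Injective lam →
      ∀ m : Fin n → ℝ,
        D n lam m =
          Matrix.det (Matrix.of fun j k : Fin n =>
            (if j = k then
                m j + ∑ l : Fin n, (φ (lam j - lam l) + φ (lam j + lam l))
              else 0)
            - (φ (lam j - lam k) + φ (lam j + lam k))) := by
  intro n
  induction n with
  | zero =>
    intro lam _ m
    rw [hbase, Matrix.det_fin_zero]
  | succ n ih =>
    intro lam hinj m
    set φp : ℝ → ℝ → ℝ := fun x y => φ (x - y) + φ (x + y) with hφp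
    set G : (Fin (n+1) → ℝ) → Matrix (Fin (n+1)) (Fin (n+1)) ℝ := fun m' =>
      Matrix.of fun j k =>
        (if j = k then m' j + ∑ l : Fin (n+1), φp (lam j) (lam l) else 0)
          - φp (lam j) (lam k) with hG
    -- key: E is independent of each coordinate of m'
    have key : ∀ (m' : Fin (n+1) → ℝ) (j : Fin (n+1)) (t : ℝ),
        D (n+1) lam (Function.update m' j t) - (G (Function.update m' j t)).det
          = D (n+1) lam (Function.update m' j 0) - (G (Function.update m' j 0)).det := by
      intro m' j t
      have hdet : (G (Function.update m' j t)).det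
          = (G (Function.update m' j 0)).det
            + t * ((G (Function.update m' j 0)).submatrix j.succAbove j.succAbove).det := by
        have hrow : G (Function.update m' j t)
            = (G (Function.update m' j 0)).updateRow j
                (G (Function.update m' j 0) j + t • (Pi.single j 1 : Fin (n+1) → ℝ)) := by
          ext i k
          by_cases hij : i = j
          · subst hij
            by_cases hik : i = k
            · subst hik
              simp [hG, Pi.single_eq_same]
              ring
            · simp [hG, hik, Pi.single_eq_of_ne (Ne.symm hik)]
          · simp [hG, Matrix.updateRow_ne hij, Function.update_of_ne hij]
        rw [hrow, Matrix.det_updateRow_add, Matrix.updateRow_eq_self,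
          Matrix.det_updateRow_smul, det_single_row_aux]
      have hsub : ((G (Function.update m' j 0)).submatrix j.succAbove j.succAbove)
          = Matrix.of (fun k l : Fin n =>
              (if k = l then
                  (m' (j.succAbove k) + φp (lam (j.succAbove k)) (lam j))
                    + ∑ l' : Fin n, φp (lam (j.succAbove k)) (lam (j.succAbove l'))
                else 0)
              - φp (lam (j.succAbove k)) (lam (j.succAbove l))) := by
        ext k l
        have hiff : (j.succAbove k = j.succAbove l) ↔ (k = l) :=
          (Fin.succAbove_right_injective (p := j)).eq_iff
        have hsum : ∑ l' : Fin (n+1), φp (lam (j.succAbove k)) (lam l')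
            = φp (lam (j.succAbove k)) (lam j)
              + ∑ l' : Fin n, φp (lam (j.succAbove k)) (lam (j.succAbove l')) :=
          Fin.sum_univ_succAbove (fun l' => φp (lam (j.succAbove k)) (lam l')) j
        simp only [hG, Matrix.submatrix_apply, Matrix.of_apply,
          Function.update_of_ne (Fin.succAbove_ne j k), hsum]
        by_cases hkl : k = l
        · subst hkl; simp [hiff]; ring
        · simp [hkl, hiff]
      have hIH := ih (lam ∘ j.succAbove)
        (hinj.comp (Fin.succAbove_right_injective))
        (fun k => m' (j.succAbove k) + φp (lam (j.succAbove k)) (lam j))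
      rw [hlin n lam m' j t, hlin n lam m' j 0, hdet, hIH, hsub]
      simp only [Function.comp_apply, hφp]
      ring
    have indep : ∀ s : Finset (Fin (n+1)),
        D (n+1) lam (fun j => if j ∈ s then 0 else m j)
            - (G (fun j => if j ∈ s then 0 else m j)).det
          = D (n+1) lam m - (G m).det := by
      intro s
      induction s using Finset.induction with
      | empty => simp
      | @insert a s ha ihs =>
        have hf : (fun j => if j ∈ insert a s then (0:ℝ) else m j)
            = Function.update (fun j => if j ∈ s then 0 else m j) a 0 := by
          funext j
          by_cases hj : j = a
          · subst hj; simp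
          · simp [Function.update_of_ne hj, hj]
        have hk := key (fun j => if j ∈ s then (0:ℝ) else m j) a
          ((fun j => if j ∈ s then (0:ℝ) else m j) a)
        rw [Function.update_eq_self] at hk
        rw [hf, ← hk]
        exact ihs
    have hzdet : (G 0).det = 0 := by
      rw [← Matrix.exists_mulVec_eq_zero_iff]
      refine ⟨fun _ => 1, ?_, ?_⟩
      · intro h
        have := congrFun h 0
        simp at this
      · funext j
        simp [Matrix.mulVec, dotProduct, hG, Finset.sum_sub_distrib,
          Finset.sum_ite_eq]
    have := indep Finset.univ
    simp only [Finset.mem_univ, if_true] at this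
    have h0 : (fun _ : Fin (n+1) => (0:ℝ)) = (0 : Fin (n+1) → ℝ) := rfl
    rw [h0] at this
    rw [hzero, hzdet, sub_zero] at this
    have : D (n+1) lam m - (G m).det = 0 := by linarith
    have hGm : (G m) = Matrix.of (fun j k : Fin (n+1) =>
        (if j = k then m j + ∑ l : Fin (n+1), (φ (lam j - lam l) + φ (lam j + lam l))
          else 0) - (φ (lam j - lam k) + φ (lam j + lam k))) := rfl
    linarith [hGm ▸ this]
end

section
/- Let $G$ be the $N \times N$ Gaudin matrix $G_{jk} = \delta_{jk}[p'(\lambda_j) L + \sum_{l=1}^N \varphi(\lambda_j - \lambda_l)] - \varphi(\lambda_j - \lambda_k)$ for an even function $\varphi$ and a rapidity set with the pair structure $\{\lambda_1^+, -\lambda_1^+, \dots, \lambda_{N/2}^+, -\lambda_{N/2}^+\}$ ($N$ even), where $p'$ is even. Then $\det G = \det G^+ \det G^-$, where $G^{\pm}$ are the $(N/2) \times (N/2)$ matrices $G^{\pm}_{jk} = \delta_{jk}[p'(\lambda_j^+) L + \sum_{l=1}^{N/2} \varphi^+(\lambda_j^+, \lambda_l^+)] - \varphi^{\pm}(\lambda_j^+,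 \lambda_k^+)$ with $\varphi^{\pm}(\lambda,\mu) = \varphi(\lambda - \mu) \pm \varphi(\lambda + \mu)$. -/
open Finset

/-- The rapidity set with pair structure: `μ_{2j} = λ_j⁺`, `μ_{2j+1} = -λ_j⁺`
(0-based indexing of the `2n` rapidities). -/
def pairRapidities (n : ℕ) (lam : Fin n → ℝ) : Fin (2 * n) → ℝ :=
  fun i =>
    if (i : ℕ) % 2 = 0 then lam ⟨(i : ℕ) / 2, by have := i.isLt; omega⟩
    else -lam ⟨(i : ℕ) / 2, by have := i.isLt; omega⟩

def interleave (n : ℕ) : Fin n ⊕ Fin n ≃ Fin (2 * n) where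
  toFun s := Sum.elim (fun j : Fin n => (⟨2*j, by have := j.isLt; omega⟩ : Fin (2*n)))
      (fun j : Fin n => (⟨2*j+1, by have := j.isLt; omega⟩ : Fin (2*n))) s
  invFun i := if (i : ℕ) % 2 = 0 then Sum.inl ⟨(i : ℕ) / 2, by have := i.isLt; omega⟩
      else Sum.inr ⟨(i : ℕ) / 2, by have := i.isLt; omega⟩
  left_inv s := by
    rcases s with j | j
    · simp only [Sum.elim_inl]
      simp only [show 2 * (j : ℕ) % 2 = 0 by omega, if_true]
      congr 1
      rw [Fin.ext_iff]
      show 2 * (j : ℕ) / 2 = j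
      omega
    · simp only [Sum.elim_inr]
      simp only [show ¬ ((2 * (j : ℕ) + 1) % 2 = 0) by omega, if_false]
      congr 1
      rw [Fin.ext_iff]
      show (2 * (j : ℕ) + 1) / 2 = j
      omega
  right_inv i := by
    dsimp only
    by_cases h : (i : ℕ) % 2 = 0
    · rw [if_pos h]
      simp only [Sum.elim_inl]
      rw [Fin.ext_iff]
      show 2 * ((i : ℕ) / 2) = i
      omega
    · rw [if_neg h]
      simp only [Sum.elim_inr]
      rw [Fin.ext_iff]
      show 2 * ((i : ℕ) / 2) + 1 = i
      omega

lemma pair_inl (n : ℕ) (lam : Fin n → ℝ) (j : Fin n) :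
    pairRapidities n lam (interleave n (Sum.inl j)) = lam j := by
  simp only [pairRapidities, interleave, Equiv.coe_fn_mk, Sum.elim_inl]
  simp only [show 2 * (j : ℕ) % 2 = 0 by omega, if_true]
  congr 1
  rw [Fin.ext_iff]
  show 2 * (j : ℕ) / 2 = j
  omega

lemma pair_inr (n : ℕ) (lam : Fin n → ℝ) (j : Fin n) :
    pairRapidities n lam (interleave n (Sum.inr j)) = -lam j := by
  simp only [pairRapidities, interleave, Equiv.coe_fn_mk, Sum.elim_inr]
  simp only [show ¬ ((2 * (j : ℕ) + 1) % 2 = 0) by omega, if_false]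
  congr 2
  rw [Fin.ext_iff]
  show (2 * (j : ℕ) + 1) / 2 = j
  omega

lemma det_fromBlocks_comm {n : ℕ} (A B : Matrix (Fin n) (Fin n) ℝ) :
    (Matrix.fromBlocks A B B A).det = (A + B).det * (A - B).det := by
  have h : Matrix.fromBlocks A B B A =
      (Matrix.fromBlocks 1 0 1 1 : Matrix (Fin n ⊕ Fin n) (Fin n ⊕ Fin n) ℝ) *
        Matrix.fromBlocks (A+B) B 0 (A-B) *
        (Matrix.fromBlocks 1 0 (-1) 1 : Matrix (Fin n ⊕ Fin n) (Fin n ⊕ Fin n) ℝ) := by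
    ext s t
    rcases s with i | i <;> rcases t with j | j <;>
      simp [Matrix.fromBlocks_multiply, Matrix.add_apply, Matrix.sub_apply,
        Matrix.neg_apply] <;> ring
  have h1 : ((Matrix.fromBlocks 1 0 1 1 : Matrix (Fin n ⊕ Fin n) (Fin n ⊕ Fin n) ℝ)).det = 1 := by
    rw [Matrix.det_fromBlocks_zero₁₂]; simp
  have h2 : ((Matrix.fromBlocks 1 0 (-1) 1 : Matrix (Fin n ⊕ Fin n) (Fin n ⊕ Fin n) ℝ)).det = 1 := by
    rw [Matrix.det_fromBlocks_zero₁₂]; simp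
  rw [h, Matrix.det_mul, Matrix.det_mul, Matrix.det_fromBlocks_zero₂₁, h1, h2]
  ring

/-- Factorization of the Gaudin determinant for parity-symmetric rapidity
sets: `det G = det G⁺ · det G⁻`. -/
theorem gaudin_factorization (n : ℕ) (φ p' : ℝ → ℝ)
    (hφ : ∀ x, φ (-x) = φ x) (hp : ∀ x, p' (-x) = p' x)
    (L : ℝ) (lam : Fin n → ℝ) :
    Matrix.det (Matrix.of fun j k : Fin (2 * n) =>
        (if j = k then
            p' (pairRapidities n lam j) * L
              + ∑ l : Fin (2 * n),
                  φ (pairRapidities n lam j - pairRapidities n lam l)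
          else 0)
        - φ (pairRapidities n lam j - pairRapidities n lam k)) =
      Matrix.det (Matrix.of fun j k : Fin n =>
        (if j = k then
            p' (lam j) * L
              + ∑ l : Fin n, (φ (lam j - lam l) + φ (lam j + lam l))
          else 0)
        - (φ (lam j - lam k) + φ (lam j + lam k)))
      * Matrix.det (Matrix.of fun j k : Fin n =>
        (if j = k then
            p' (lam j) * L
              + ∑ l : Fin n, (φ (lam j - lam l) + φ (lam j + lam l))
          else 0)
        - (φ (lam j - lam k) - φ (lam j + lam k))) := by
  set D : Fin n → ℝ := fun j =>
    p' (lam j) * L + ∑ l : Fin n, (φ (lam j - lam l) + φ (lam j + lam l)) with hD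
  set X : Matrix (Fin n) (Fin n) ℝ :=
    Matrix.of fun j k => (if j = k then D j else 0) - φ (lam j - lam k) with hX
  set Y : Matrix (Fin n) (Fin n) ℝ :=
    Matrix.of fun j k => -φ (lam j + lam k) with hY
  have keysum : ∀ x : ℝ,
      ∑ l : Fin (2 * n), φ (x - pairRapidities n lam l)
        = ∑ l : Fin n, (φ (x - lam l) + φ (x + lam l)) := by
    intro x
    rw [← Equiv.sum_comp (interleave n) (fun l => φ (x - pairRapidities n lam l)),
      Fintype.sum_sum_type]
    simp only [pair_inl, pair_inr, sub_neg_eq_add]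
    rw [← Finset.sum_add_distrib]
  set M : Matrix (Fin (2*n)) (Fin (2*n)) ℝ :=
    Matrix.of fun j k : Fin (2 * n) =>
        (if j = k then
            p' (pairRapidities n lam j) * L
              + ∑ l : Fin (2 * n),
                  φ (pairRapidities n lam j - pairRapidities n lam l)
          else 0)
        - φ (pairRapidities n lam j - pairRapidities n lam k) with hM
  have hsub : M.submatrix (interleave n) (interleave n) = Matrix.fromBlocks X Y Y X := by
    ext s t
    rcases s with j | j <;> rcases t with k | k <;>
      simp only [Matrix.submatrix_apply, hM, Matrix.of_apply,
        Matrix.fromBlocks_apply₁₁, Matrix.fromBlocks_apply₁₂,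
        Matrix.fromBlocks_apply₂₁, Matrix.fromBlocks_apply₂₂, hX, hY,
        pair_inl, pair_inr, EmbeddingLike.apply_eq_iff_eq, Sum.inl.injEq,
        Sum.inr.injEq, reduceCtorEq, if_false]
    · rw [keysum]
    · rw [sub_neg_eq_add, zero_sub]
    · have h1 : -lam j - lam k = -(lam j + lam k) := by ring
      rw [h1, hφ, zero_sub]
    · have h1 : -lam j - -lam k = -(lam j - lam k) := by ring
      rw [h1, hφ, hp, keysum]
      congr 1
      split
      · congr 1
        apply Finset.sum_congr rfl
        intro l _
        have h2 : -lam j - lam l = -(lam j + lam l) := by ring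
        have h3 : -lam j + lam l = -(lam j - lam l) := by ring
        rw [h2, h3, hφ, hφ]; ring
      · rfl
  have hdet : M.det = (Matrix.fromBlocks X Y Y X).det := by
    rw [← hsub, Matrix.det_submatrix_equiv_self]
  rw [hdet, det_fromBlocks_comm]
  congr 1 <;> congr 1 <;> ext j k <;>
    simp only [Matrix.add_apply, Matrix.sub_apply, hX, hY, Matrix.of_apply, hD] <;>
    split <;> ring
end

section
/- Define the $2\times 2$ matrices $A_i, \tilde{A}_i$ ($i = 1,\dots,4$) over rational functions in $u$ with parameter $\alpha$: $A_1 = \begin{pmatrix} (u+i/2)^2 & i\alpha(u+i/2) \\ 0 & (u-i/2)^2 \end{pmatrix}$, $\tilde{A}_1 = \begin{pmatrix} (u+i/2)^2 & i\alpha(u-i/2) \\ 0 & (u-i/2)^2 \end{pmatrix}$, $A_2 = \begin{pmatrix} 0 & 0 \\ i(u+i/2) & -\alpha \end{pmatrix}$, $\tilde{A}_2 = \begin{pmatrix} -\alpha & 0 \\ i(u-i/2) & 0 \end{pmatrix}$, $A_3 = \begin{pmatrix} i\alpha(u+i/2) & i\alpha^2(u+i/2) \\ i(u-i/2) & -i\alpha(u-i/2)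 \end{pmatrix}$, $\tilde{A}_3 = \begin{pmatrix} i\alpha(u+i/2) & i\alpha^2(u-i/2) \\ i(u+i/2) & -i\alpha(u-i/2) \end{pmatrix}$, $A_4 = \begin{pmatrix} 0 & 0 \\ -\alpha & -\alpha^2 \end{pmatrix}$, $\tilde{A}_4 = \begin{pmatrix} -\alpha^2 & 0 \\ \alpha & 0 \end{pmatrix}$. Then with $\tilde{K}(u) = \begin{pmatrix} 2u & (u+i/2)\alpha \\ (u-i/2)\alpha & 0 \end{pmatrix}$, one has $\tilde{K}(u) A_i \tilde{K}(u)^{-1} = \tilde{A}_i^{\mathrm{T}}$ for each $i = 1, 2, 3, 4$ (equivalently $\tilde{K}(u) A_i = \tilde{A}_i^{\mathrm{T}} \tilde{K}(u)$), whenever $\det \tilde{K}(u) \neq 0$. -/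
open Complex Matrix

/-- The intertwining relation `K̃(u) Aᵢ K̃(u)⁻¹ = Ãᵢᵀ` for the matrices arising
in the proof of integrability of the two-site coherent boundary state of the
non-compact `SL(2,ℝ)` spin chain. -/
theorem K_matrix_intertwining (u α : ℂ) (hα : α ≠ 0)
    (h1 : u ≠ I / 2) (h2 : u ≠ -(I / 2))
    (K : Matrix (Fin 2) (Fin 2) ℂ)
    (hK : K = !![2 * u, (u + I / 2) * α; (u - I / 2) * α, 0])
    (A₁ A₂ A₃ A₄ tA₁ tA₂ tA₃ tA₄ : Matrix (Fin 2) (Fin 2) ℂ)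
    (hA₁ : A₁ = !![(u + I / 2) ^ 2, I * α * (u + I / 2); 0, (u - I / 2) ^ 2])
    (htA₁ : tA₁ = !![(u + I / 2) ^ 2, I * α * (u - I / 2); 0, (u - I / 2) ^ 2])
    (hA₂ : A₂ = !![0, 0; I * (u + I / 2), -α])
    (htA₂ : tA₂ = !![-α, 0; I * (u - I / 2), 0])
    (hA₃ : A₃ = !![I * α * (u + I / 2), I * α ^ 2 * (u + I / 2);
                   I * (u - I / 2), -(I * α * (u - I / 2))])
    (htA₃ : tA₃ = !![I * α * (u + I / 2), I * α ^ 2 * (u - I / 2);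
                     I * (u + I / 2), -(I * α * (u - I / 2))])
    (hA₄ : A₄ = !![0, 0; -α, -α ^ 2])
    (htA₄ : tA₄ = !![-α ^ 2, 0; α, 0]) :
    K * A₁ * K⁻¹ = tA₁ᵀ ∧ K * A₂ * K⁻¹ = tA₂ᵀ ∧
    K * A₃ * K⁻¹ = tA₃ᵀ ∧ K * A₄ * K⁻¹ = tA₄ᵀ := by
  have hp : u + I / 2 ≠ 0 := fun h => h2 (by linear_combination h)
  have hm : u - I / 2 ≠ 0 := sub_ne_zero.mpr h1
  have hdet : K.det ≠ 0 := by
    rw [hK, Matrix.det_fin_two_of]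
    simp only [mul_zero, zero_sub, neg_ne_zero]
    exact mul_ne_zero (mul_ne_zero hp hα) (mul_ne_zero hm hα)
  have : Invertible K := K.invertibleOfIsUnitDet hdet.isUnit
  refine ⟨?_, ?_, ?_, ?_⟩ <;>
  · rw [Matrix.mul_inv_eq_iff_eq_mul_of_invertible]
    subst hK hA₁ hA₂ hA₃ hA₄ htA₁ htA₂ htA₃ htA₄
    ext i j
    fin_cases i <;> fin_cases j <;>
      simp [Matrix.vecHead, Matrix.transpose_apply, Matrix.mul_apply, Fin.sum_univ_two] <;>
      (first | ring1 | linear_combination (2 * u * α) * Complex.I_sq)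
end
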